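/- arXiv:1607.02370 — 11 statements merged into one kernel-verified Lean document; each statement's English description precedes it below -/
import Mathlib

section
/- Let p be a prime number and let q be an integer with 1 < q < p. For every u ∈ ℤ_p, u is rational if and only if the sequence (g_{p,q}^n(u))_{n∈ℕ} is ultimately periodic. -/
open scoped Classical

/-- `ε₀(u)`: the unique integer in `{0, …, p−1}` congruent to `u` modulo `p`. -/
noncomputable def eps0 {p : ℕ} [Fact p.Prime] (u : ℤ_[p]) : ℕ := (PadicInt.toZMod u).val

section Aux

variable {p q : ℕ} [Fact p.Prime]

private lemma pdvd_int {m : ℤ} (h : (p : ℤ_[p]) ∣ (m : ℤ_[p])) : (p : ℤ) ∣ m :=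
  (PadicInt.norm_int_lt_one_iff_dvd m).mp ((PadicInt.norm_lt_one_iff_dvd _).mpr h)

private lemma eps0_lt (u : ℤ_[p]) : eps0 u < p := by
  haveI : NeZero p := ⟨(Fact.out : p.Prime).ne_zero⟩
  exact ZMod.val_lt _

/-- Affine relation for iterates. -/
private lemma affine (hq1 : 1 ≤ q)
    (g : ℤ_[p] → ℤ_[p])
    (hg : ∀ u : ℤ_[p], (p : ℤ_[p]) * g u =
      if (p : ℤ_[p]) ∣ u then u
      else (q : ℤ_[p]) * u + (eps0 (-((q : ℤ_[p]) * u)) : ℤ_[p]))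
    (v : ℤ_[p]) (n : ℕ) :
    ∃ A B : ℕ, 1 ≤ A ∧ A ≤ q ^ n ∧
      (p : ℤ_[p]) ^ n * g^[n] v = (A : ℤ_[p]) * v + (B : ℤ_[p]) := by
  induction n with
  | zero => exact ⟨1, 0, le_rfl, le_rfl, by simp⟩
  | succ n ih =>
    obtain ⟨A, B, hA1, hAq, hrel⟩ := ih
    have hgw := hg (g^[n] v)
    by_cases hw : (p : ℤ_[p]) ∣ g^[n] v
    · rw [if_pos hw] at hgw
      refine ⟨A, B, hA1, hAq.trans ?_, ?_⟩
      · exact Nat.pow_le_pow_right hq1 (Nat.le_succ n)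
      · rw [Function.iterate_succ_apply', pow_succ]
        calc (p : ℤ_[p]) ^ n * p * g (g^[n] v)
            = (p : ℤ_[p]) ^ n * ((p : ℤ_[p]) * g (g^[n] v)) := by ring
          _ = (p : ℤ_[p]) ^ n * g^[n] v := by rw [hgw]
          _ = (A : ℤ_[p]) * v + (B : ℤ_[p]) := hrel
    · rw [if_neg hw] at hgw
      refine ⟨q * A, q * B + p ^ n * eps0 (-((q : ℤ_[p]) * g^[n] v)), ?_, ?_, ?_⟩
      · exact Nat.one_le_iff_ne_zero.mpr (Nat.mul_ne_zero (by omega) (by omega))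
      · rw [pow_succ, Nat.mul_comm]
        exact Nat.mul_le_mul hAq le_rfl
      · rw [Function.iterate_succ_apply', pow_succ]
        push_cast
        calc (p : ℤ_[p]) ^ n * p * g (g^[n] v)
            = (p : ℤ_[p]) ^ n * ((p : ℤ_[p]) * g (g^[n] v)) := by ring
          _ = (p : ℤ_[p]) ^ n * ((q : ℤ_[p]) * g^[n] v
                + (eps0 (-((q : ℤ_[p]) * g^[n] v)) : ℕ)) := by rw [hgw]
          _ = (q : ℤ_[p]) * ((p : ℤ_[p]) ^ n * g^[n] v)
                + (p : ℤ_[p]) ^ n * (eps0 (-((q : ℤ_[p]) * g^[n] v)) : ℕ) := by ring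
          _ = _ := by rw [hrel]; ring

/-- One step of the numerator-bound invariant. -/
private lemma step (hqp : q < p)
    (g : ℤ_[p] → ℤ_[p])
    (hg : ∀ u : ℤ_[p], (p : ℤ_[p]) * g u =
      if (p : ℤ_[p]) ∣ u then u
      else (q : ℤ_[p]) * u + (eps0 (-((q : ℤ_[p]) * u)) : ℤ_[p]))
    (b : ℕ) (M : ℤ) (hM : ((p : ℤ) - 1) * b ≤ M)
    (v : ℤ_[p]) (a : ℤ) (ha : (b : ℤ_[p]) * v = (a : ℤ_[p])) (haM : |a| ≤ M) :
    ∃ a' : ℤ, (b : ℤ_[p]) * g v = (a' : ℤ_[p]) ∧ |a'| ≤ M := by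
  have hp : p.Prime := Fact.out
  have hpne : (p : ℤ_[p]) ≠ 0 := Nat.cast_ne_zero.mpr hp.ne_zero
  have hppos : (0 : ℤ) < p := by exact_mod_cast hp.pos
  have hgv := hg v
  by_cases hv : (p : ℤ_[p]) ∣ v
  · rw [if_pos hv] at hgv
    have hpa : (p : ℤ) ∣ a := by
      apply pdvd_int
      rw [← ha]
      exact hv.mul_left _
    obtain ⟨a', rfl⟩ := hpa
    refine ⟨a', ?_, ?_⟩
    · apply mul_left_cancel₀ hpne
      have : (p : ℤ_[p]) * ((b : ℤ_[p]) * g v) = (b : ℤ_[p]) * ((p : ℤ_[p]) * g v) := by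
        ring
      rw [this, hgv, ha]
      push_cast
      ring
    · rw [abs_mul, abs_of_pos hppos] at haM
      nlinarith [abs_nonneg a', abs_nonneg ((p : ℤ) * a')]
  · rw [if_neg hv] at hgv
    set ε : ℕ := eps0 (-((q : ℤ_[p]) * v)) with hεdef
    have hεlt : ε < p := eps0_lt _
    have hkey : (p : ℤ_[p]) * ((b : ℤ_[p]) * g v) = (((q : ℤ) * a + (ε : ℤ) * b : ℤ) : ℤ_[p]) := by
      have h1 : (p : ℤ_[p]) * ((b : ℤ_[p]) * g v) = (b : ℤ_[p]) * ((p : ℤ_[p]) * g v) := by ring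
      rw [h1, hgv]
      push_cast
      rw [show (b : ℤ_[p]) * ((q : ℤ_[p]) * v + (ε : ℤ_[p])) =
        (q : ℤ_[p]) * ((b : ℤ_[p]) * v) + (ε : ℤ_[p]) * (b : ℤ_[p]) from by ring, ha]
    have hpd : (p : ℤ) ∣ ((q : ℤ) * a + (ε : ℤ) * b) := by
      apply pdvd_int
      exact ⟨(b : ℤ_[p]) * g v, hkey.symm⟩
    obtain ⟨a', ha'⟩ := hpd
    refine ⟨a', ?_, ?_⟩
    · apply mul_left_cancel₀ hpne
      rw [hkey, ha']
      push_cast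
      ring
    · -- bound
      have hMnn : (0 : ℤ) ≤ M := le_trans (mul_nonneg (by linarith) (Int.natCast_nonneg b)) hM
      have habs : |(q : ℤ) * a + (ε : ℤ) * b| ≤ (q : ℤ) * M + M := by
        calc |(q : ℤ) * a + (ε : ℤ) * b| ≤ |(q : ℤ) * a| + |(ε : ℤ) * b| := abs_add_le _ _
          _ = (q : ℤ) * |a| + (ε : ℤ) * b := by
              rw [abs_mul, abs_mul]
              simp [abs_of_nonneg, Int.natCast_nonneg]
          _ ≤ (q : ℤ) * M + ((p : ℤ) - 1) * b := by
              have h1 : (q : ℤ) * |a| ≤ (q : ℤ) * M :=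
                mul_le_mul_of_nonneg_left haM (by positivity)
              have h2 : (ε : ℤ) * b ≤ ((p : ℤ) - 1) * b := by
                have : (ε : ℤ) ≤ (p : ℤ) - 1 := by omega
                exact mul_le_mul_of_nonneg_right this (by positivity)
              linarith
          _ ≤ (q : ℤ) * M + M := by linarith
      rw [ha', abs_mul, abs_of_pos hppos] at habs
      have hqp' : (q : ℤ) + 1 ≤ p := by exact_mod_cast hqp
      nlinarith [abs_nonneg a']

end Aux

/-- Let `p` be prime, `q` an integer with `1 < q < p`, and `g = g_{p,q}` (characterized by
`p * g u = u` if `p ∣ u` and `p * g u = q * u + ε₀(-q*u)` otherwise). Then `u ∈ ℤ_p` is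
rational iff the sequence of iterates `(g^n u)` is ultimately periodic. -/
theorem stmt0 (p q : ℕ) [Fact p.Prime] (hq1 : 1 < q) (hqp : q < p)
    (g : ℤ_[p] → ℤ_[p])
    (hg : ∀ u : ℤ_[p], (p : ℤ_[p]) * g u =
      if (p : ℤ_[p]) ∣ u then u
      else (q : ℤ_[p]) * u + (eps0 (-((q : ℤ_[p]) * u)) : ℤ_[p]))
    (u : ℤ_[p]) :
    ((u : ℚ_[p]) ∈ Set.range ((↑) : ℚ → ℚ_[p])) ↔
      ∃ n₀ : ℕ, ∃ k ≥ 1, ∀ n ≥ n₀, g^[n + k] u = g^[n] u := by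
  have hp : p.Prime := Fact.out
  constructor
  · -- rational ⇒ ultimately periodic
    rintro ⟨r, hr⟩
    set b : ℕ := r.den with hbdef
    set a : ℤ := r.num with hadef
    have hbpos : 0 < b := r.pos
    have hbQ : (b : ℚ_[p]) ≠ 0 := Nat.cast_ne_zero.mpr hbpos.ne'
    have hbu : (b : ℤ_[p]) * u = (a : ℤ_[p]) := by
      apply Subtype.coe_injective
      push_cast
      rw [← hr, Rat.cast_def]
      field_simp
      rw [hbdef, hadef]
    set M : ℤ := max |a| (((p : ℤ) - 1) * b) with hMdef
    have hM : ((p : ℤ) - 1) * b ≤ M := le_max_right _ _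
    -- invariant
    have hinv : ∀ n : ℕ, ∃ a' : ℤ, (b : ℤ_[p]) * g^[n] u = (a' : ℤ_[p]) ∧ |a'| ≤ M := by
      intro n
      induction n with
      | zero => exact ⟨a, hbu, le_max_left _ _⟩
      | succ n ih =>
        obtain ⟨a', ha', haM'⟩ := ih
        obtain ⟨a'', h1, h2⟩ := step hqp g hg b M hM (g^[n] u) a' ha' haM'
        exact ⟨a'', by rwa [Function.iterate_succ_apply'], h2⟩
    choose f hf hfM using hinv
    -- pigeonhole
    have hmaps : ∀ n ∈ Finset.range ((Finset.Icc (-M) M).card + 1),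
        f n ∈ Finset.Icc (-M) M := by
      intro n _
      exact Finset.mem_Icc.mpr (abs_le.mp (hfM n))
    obtain ⟨m, hm, n, hn, hmn, hfe⟩ :=
      Finset.exists_ne_map_eq_of_card_lt_of_maps_to
        (by simp) hmaps
    have hbZ : (b : ℤ_[p]) ≠ 0 := Nat.cast_ne_zero.mpr hbpos.ne'
    have heq : ∀ m n : ℕ, f m = f n → g^[m] u = g^[n] u := by
      intro m n h
      apply mul_left_cancel₀ hbZ
      rw [hf m, hf n, h]
    rcases Nat.lt_or_ge m n with hlt | hge
    case _ =>
      refine ⟨m, n - m, by omega, ?_⟩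
      intro j hj
      have hper : g^[n] u = g^[m] u := (heq m n hfe).symm
      have e1 : j + (n - m) = (j - m) + n := by omega
      have e2 : (j - m) + m = j := by omega
      rw [e1, Function.iterate_add_apply, hper, ← Function.iterate_add_apply, e2]
    case _ =>
      have hlt : n < m := by omega
      refine ⟨n, m - n, by omega, ?_⟩
      intro j hj
      have hper : g^[m] u = g^[n] u := heq m n hfe
      have e1 : j + (m - n) = (j - n) + m := by omega
      have e2 : (j - n) + n = j := by omega
      rw [e1, Function.iterate_add_apply, hper, ← Function.iterate_add_apply, e2]
  · -- ultimately periodic ⇒ rational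
    rintro ⟨n₀, k, hk, hper⟩
    set v : ℤ_[p] := g^[n₀] u with hvdef
    have hcyc : g^[k] v = v := by
      have h := hper n₀ le_rfl
      rwa [Nat.add_comm, Function.iterate_add_apply] at h
    obtain ⟨A, B, hA1, hAq, hrel⟩ := affine hq1.le g hg v k
    rw [hcyc] at hrel
    have hAp : A < p ^ k := lt_of_le_of_lt hAq (Nat.pow_lt_pow_left hqp (by omega))
    set c : ℕ := p ^ k - A with hcdef
    have hcpos : 0 < c := by omega
    have hcv : (c : ℤ_[p]) * v = (B : ℤ_[p]) := by
      have hcast : (c : ℤ_[p]) = (p : ℤ_[p]) ^ k - (A : ℤ_[p]) := by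
        rw [hcdef]
        push_cast [Nat.cast_sub hAp.le]
        ring
      rw [hcast, sub_mul, hrel]
      ring
    have hcQ : (c : ℚ_[p]) ≠ 0 := Nat.cast_ne_zero.mpr hcpos.ne'
    have hcvQ : (c : ℚ_[p]) * (v : ℚ_[p]) = (B : ℚ_[p]) := by
      have h0 := congrArg (fun z : ℤ_[p] => (z : ℚ_[p])) hcv
      push_cast at h0
      exact h0
    obtain ⟨A', B', hA'1, _, hrel'⟩ := affine hq1.le g hg u n₀
    have hA'Q : ((A' : ℚ_[p])) ≠ 0 := Nat.cast_ne_zero.mpr (by omega)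
    have h : (p : ℚ_[p]) ^ n₀ * (v : ℚ_[p]) = (A' : ℚ_[p]) * (u : ℚ_[p]) + (B' : ℚ_[p]) := by
      have h0 := congrArg (fun z : ℤ_[p] => (z : ℚ_[p])) hrel'
      push_cast at h0
      exact h0
    refine ⟨((p : ℚ) ^ n₀ * ((B : ℚ) / (c : ℚ)) - (B' : ℚ)) / (A' : ℚ), ?_⟩
    apply mul_left_cancel₀ hA'Q
    push_cast
    rw [mul_comm ((A' : ℚ_[p])) _, div_mul_cancel₀ _ hA'Q]
    have hv' : ((B : ℚ_[p]) / (c : ℚ_[p])) = (v : ℚ_[p]) := by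
      rw [← hcvQ, mul_comm, mul_div_assoc, div_self hcQ, mul_one]
    rw [hv']
    linear_combination h
end

section
/- Let p be a prime number, q an integer with 1 < q < p, ψ : ℕ → ℕ a strictly increasing function, and (a_n)_{n∈ℕ} a sequence of integers with 1 ≤ a_n ≤ p−1 for all n. The formal power series G(T) = Σ_{n=0}^∞ a_n·p^{ψ(n)}·T^n ∈ ℚ[[T]] is rational (i.e. there exist polynomials P, Q ∈ ℚ[T] with Q ≠ 0 and Q·G = P) if and only if the p-adically convergent sum Σ_{n=0}^∞ a_n·p^{ψ(n)}·q^{−n} ∈ ℚ_p is rational. -/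
open Filter Topology Finset

section auxiliary
variable (p q : ℕ) [hp : Fact p.Prime]

lemma norm_q_inv' (hq1 : 1 < q) (hqp : q < p) : ‖((q : ℚ_[p]))⁻¹‖ = 1 := by
  have hdvd : ¬ (p : ℤ) ∣ (q : ℤ) := by
    rw [Int.natCast_dvd_natCast]
    exact Nat.not_dvd_of_pos_of_lt (lt_trans one_pos hq1) hqp
  have h1 : ‖((q : ℤ) : ℚ_[p])‖ = 1 := by
    rcases lt_or_eq_of_le (Padic.norm_int_le_one (p := p) ((q:ℤ))) with h | h
    · exact absurd (Padic.norm_intCast_lt_one_iff.mp h) hdvd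
    · exact h
  rw [norm_inv]
  simp only [Int.cast_natCast] at h1
  rw [h1]; norm_num


lemma norm_int_unit (c : ℤ) (hdvd : ¬ (p:ℤ) ∣ c) : ‖(c : ℚ_[p])‖ = 1 := by
  rcases lt_or_eq_of_le (Padic.norm_int_le_one (p := p) c) with h | h
  · exact absurd (Padic.norm_intCast_lt_one_iff.mp h) hdvd
  · exact h

lemma norm_term_le' (c : ℤ) (e : ℕ) (y : ℚ_[p]) (hy : ‖y‖ ≤ 1) :
    ‖(c : ℚ_[p]) * (p:ℚ_[p]) ^ e * y‖ ≤ (p:ℝ) ^ (-(e:ℤ)) := by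
  calc ‖(c : ℚ_[p]) * (p:ℚ_[p]) ^ e * y‖ = ‖(c:ℚ_[p])‖ * ‖(p:ℚ_[p])^e‖ * ‖y‖ := by
        rw [norm_mul, norm_mul]
    _ ≤ 1 * ((p:ℝ) ^ (-(e:ℤ))) * 1 := by
        apply mul_le_mul
        · apply mul_le_mul (Padic.norm_int_le_one (p := p) c)
            (le_of_eq (Padic.norm_p_pow e)) (norm_nonneg _) zero_le_one
        · exact hy
        · exact norm_nonneg _
        · positivity
    _ = (p:ℝ) ^ (-(e:ℤ)) := by ring

lemma summable_series' (c : ℕ → ℤ) (e : ℕ → ℕ) (he : ∀ n, n ≤ e n) (x : ℚ_[p]) (hx : ‖x‖ ≤ 1) :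
    Summable (fun n => (c n : ℚ_[p]) * (p:ℚ_[p]) ^ (e n) * x ^ n) := by
  apply NonarchimedeanAddGroup.summable_of_tendsto_cofinite_zero
  rw [Nat.cofinite_eq_atTop, tendsto_zero_iff_norm_tendsto_zero]
  apply squeeze_zero (fun n => norm_nonneg _) (g := fun n => ((p:ℝ)⁻¹) ^ n)
  · intro n
    calc ‖(c n : ℚ_[p]) * (p:ℚ_[p]) ^ (e n) * x ^ n‖ ≤ (p:ℝ) ^ (-((e n):ℤ)) :=
          norm_term_le' p (c n) (e n) (x ^ n) (by
            calc ‖x ^ n‖ = ‖x‖ ^ n := norm_pow x n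
              _ ≤ 1 ^ n := pow_le_pow_left₀ (norm_nonneg x) hx n
              _ = 1 := one_pow n)
      _ ≤ (p:ℝ) ^ (-(n:ℤ)) := by
          apply zpow_le_zpow_right₀ (by exact_mod_cast hp.out.one_le)
          exact neg_le_neg (by exact_mod_cast he n)
      _ = ((p:ℝ)⁻¹) ^ n := by rw [zpow_neg, zpow_natCast, inv_pow]
  · exact tendsto_pow_atTop_nhds_zero_of_lt_one (by positivity) (by
      rw [inv_lt_one_iff₀]; right; exact_mod_cast hp.out.one_lt)

lemma norm_tsum_le_of' (f : ℕ → ℚ_[p]) (C : ℝ) (hC : 0 ≤ C) (h : ∀ n, ‖f n‖ ≤ C) :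
    ‖∑' n, f n‖ ≤ C :=
  IsUltrametricDist.norm_tsum_le_of_forall_le_of_nonneg hC h

lemma digits_unique' (x : ℚ_[p]) (hx : ‖x‖ = 1)
    (α β : ℕ → ℤ) (hα : ∀ m, 1 ≤ α m ∧ α m ≤ (p:ℤ) - 1) (hβ : ∀ m, 1 ≤ β m ∧ β m ≤ (p:ℤ) - 1)
    (e f : ℕ → ℕ) (he : StrictMono e) (hf : StrictMono f)
    (h : ∑' m, ((α m : ℚ_[p]) * (p:ℚ_[p]) ^ (e m) * x ^ m)
       = ∑' m, ((β m : ℚ_[p]) * (p:ℚ_[p]) ^ (f m) * x ^ m)) :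
    ∀ m, α m = β m ∧ e m = f m := by
  have hp1 : (1:ℝ) < p := by exact_mod_cast hp.out.one_lt
  have hxn : ∀ n : ℕ, ‖x ^ n‖ = 1 := fun n => by rw [norm_pow, hx, one_pow]
  set F1 : ℕ → ℚ_[p] := fun m => (α m : ℚ_[p]) * (p:ℚ_[p]) ^ (e m) * x ^ m with hF1
  set F2 : ℕ → ℚ_[p] := fun m => (β m : ℚ_[p]) * (p:ℚ_[p]) ^ (f m) * x ^ m with hF2
  have hsum1 : Summable F1 := summable_series' p α e (fun n => he.le_apply) x hx.le
  have hsum2 : Summable F2 := summable_series' p β f (fun n => hf.le_apply) x hx.le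
  -- digit norms
  have hαnorm : ∀ m, ‖((α m : ℤ) : ℚ_[p])‖ = 1 := by
    intro m
    apply norm_int_unit
    intro hd
    have := Int.le_of_dvd (lt_of_lt_of_le one_pos (hα m).1) hd
    have := (hα m).2
    omega
  have hβnorm : ∀ m, ‖((β m : ℤ) : ℚ_[p])‖ = 1 := by
    intro m
    apply norm_int_unit
    intro hd
    have := Int.le_of_dvd (lt_of_lt_of_le one_pos (hβ m).1) hd
    have := (hβ m).2
    omega
  intro m
  induction m using Nat.strong_induction_on with
  | _ m IH =>
  -- tails are equal
  have h1 := Summable.sum_add_tsum_nat_add (f := F1) m hsum1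
  have h2 := Summable.sum_add_tsum_nat_add (f := F2) m hsum2
  have hpart : ∑ i ∈ range m, F1 i = ∑ i ∈ range m, F2 i := by
    apply Finset.sum_congr rfl
    intro i hi
    have hi' := Finset.mem_range.mp hi
    rw [hF1, hF2]
    simp only
    rw [(IH i hi').1, (IH i hi').2]
  have htails : ∑' j, F1 (j + m) = ∑' j, F2 (j + m) := by
    have h' : ∑ i ∈ range m, F1 i + ∑' j, F1 (j + m)
        = ∑ i ∈ range m, F2 i + ∑' j, F2 (j + m) := by rw [h1, h2, h]
    rw [hpart] at h'
    exact add_left_cancel h'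
  -- peel off the first term of each tail
  have hs1 : Summable (fun j => F1 (j + m)) := (summable_nat_add_iff m).mpr hsum1
  have hs2 : Summable (fun j => F2 (j + m)) := (summable_nat_add_iff m).mpr hsum2
  have hz1 := Summable.tsum_eq_zero_add hs1
  have hz2 := Summable.tsum_eq_zero_add hs2
  rw [hz1, hz2] at htails
  simp only [Nat.zero_add] at htails
  set T1 : ℚ_[p] := ∑' j, F1 (j + 1 + m) with hT1
  set T2 : ℚ_[p] := ∑' j, F2 (j + 1 + m) with hT2
  have htails' : F1 m + T1 = F2 m + T2 := htails
  -- norm bounds on tails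
  set E : ℕ := min (e m) (f m) with hE
  have hTbound : ∀ (T : ℚ_[p]) (g : ℕ → ℕ) (c : ℕ → ℤ) (hg : StrictMono g)
      (hgE : E ≤ g m), T = ∑' j, ((c (j+1+m) : ℚ_[p]) * (p:ℚ_[p]) ^ (g (j+1+m)) * x ^ (j+1+m)) →
      ‖T‖ ≤ (p:ℝ) ^ (-(E+1:ℤ)) := by
    intro T g c hg hgE hTeq
    rw [hTeq]
    apply norm_tsum_le_of'
    · positivity
    · intro j
      calc ‖(c (j+1+m) : ℚ_[p]) * (p:ℚ_[p]) ^ (g (j+1+m)) * x ^ (j+1+m)‖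
          ≤ (p:ℝ) ^ (-((g (j+1+m)):ℤ)) := norm_term_le' p _ _ _ (le_of_eq (hxn _))
        _ ≤ (p:ℝ) ^ (-(E+1:ℤ)) := by
            apply zpow_le_zpow_right₀ (le_of_lt hp1)
            have h1 : g m + 1 ≤ g (j + 1 + m) := by
              have : m < j + 1 + m := by omega
              have := hg this
              omega
            have : E + 1 ≤ (g (j+1+m) : ℤ) := by
              push_cast
              omega
            linarith
  have hT1b : ‖T1‖ ≤ (p:ℝ) ^ (-(E+1:ℤ)) :=
    hTbound T1 e α he (min_le_left _ _) rfl
  have hT2b : ‖T2‖ ≤ (p:ℝ) ^ (-(E+1:ℤ)) :=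
    hTbound T2 f β hf (min_le_right _ _) rfl
  -- the difference
  have hD : F1 m - F2 m = T2 - T1 := by
    linear_combination htails'
  have hDnorm : ‖F1 m - F2 m‖ ≤ (p:ℝ) ^ (-(E+1:ℤ)) := by
    rw [hD, sub_eq_add_neg]
    calc ‖T2 + -T1‖ ≤ max ‖T2‖ ‖-T1‖ := IsUltrametricDist.norm_add_le_max _ _
      _ ≤ (p:ℝ) ^ (-(E+1:ℤ)) := by rw [norm_neg]; exact max_le hT2b hT1b
  have hlt : (p:ℝ) ^ (-(E+1:ℤ)) < (p:ℝ) ^ (-(E:ℤ)) := by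
    apply zpow_lt_zpow_right₀ hp1
    omega
  -- first: e m = f m
  have hef : e m = f m := by
    by_contra hne
    rcases lt_or_gt_of_ne hne with hlt' | hlt'
    · -- e m < f m, E = e m
      have hEe : E = e m := min_eq_left (le_of_lt hlt')
      have hn1 : ‖F1 m‖ = (p:ℝ) ^ (-(e m:ℤ)) := by
        rw [hF1]
        simp only
        rw [norm_mul, norm_mul, hαnorm, Padic.norm_p_pow, hxn]
        ring
      have hn2 : ‖F2 m‖ ≤ (p:ℝ) ^ (-(E+1:ℤ)) := by
        calc ‖F2 m‖ ≤ (p:ℝ) ^ (-(f m:ℤ)) := norm_term_le' p _ _ _ (le_of_eq (hxn _))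
          _ ≤ (p:ℝ) ^ (-(E+1:ℤ)) := by
              apply zpow_le_zpow_right₀ (le_of_lt hp1)
              rw [hEe]
              push_cast
              omega
      have : ‖F1 m‖ ≤ (p:ℝ) ^ (-(E+1:ℤ)) := by
        calc ‖F1 m‖ = ‖(F1 m - F2 m) + F2 m‖ := by ring_nf
          _ ≤ max ‖F1 m - F2 m‖ ‖F2 m‖ := IsUltrametricDist.norm_add_le_max _ _
          _ ≤ (p:ℝ) ^ (-(E+1:ℤ)) := max_le hDnorm hn2
      rw [hn1, ← hEe] at this
      exact absurd this (not_le_of_gt hlt)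
    · -- f m < e m
      have hEe : E = f m := min_eq_right (le_of_lt hlt')
      have hn1 : ‖F2 m‖ = (p:ℝ) ^ (-(f m:ℤ)) := by
        rw [hF2]
        simp only
        rw [norm_mul, norm_mul, hβnorm, Padic.norm_p_pow, hxn]
        ring
      have hn2 : ‖F1 m‖ ≤ (p:ℝ) ^ (-(E+1:ℤ)) := by
        calc ‖F1 m‖ ≤ (p:ℝ) ^ (-(e m:ℤ)) := norm_term_le' p _ _ _ (le_of_eq (hxn _))
          _ ≤ (p:ℝ) ^ (-(E+1:ℤ)) := by
              apply zpow_le_zpow_right₀ (le_of_lt hp1)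
              rw [hEe]
              push_cast
              omega
      have : ‖F2 m‖ ≤ (p:ℝ) ^ (-(E+1:ℤ)) := by
        calc ‖F2 m‖ = ‖(F2 m - F1 m) + F1 m‖ := by ring_nf
          _ ≤ max ‖F2 m - F1 m‖ ‖F1 m‖ := IsUltrametricDist.norm_add_le_max _ _
          _ ≤ (p:ℝ) ^ (-(E+1:ℤ)) := by
              refine max_le ?_ hn2
              rw [norm_sub_rev]
              exact hDnorm
      rw [hn1, ← hEe] at this
      exact absurd this (not_le_of_gt hlt)
  -- second: α m = β m
  refine ⟨?_, hef⟩
  by_contra hne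
  have hdiff : F1 m - F2 m = ((α m - β m : ℤ) : ℚ_[p]) * (p:ℚ_[p]) ^ (e m) * x ^ m := by
    rw [hF1, hF2]
    simp only
    rw [hef]
    push_cast
    ring
  have hdnorm : ‖F1 m - F2 m‖ = (p:ℝ) ^ (-(e m:ℤ)) := by
    rw [hdiff, norm_mul, norm_mul, Padic.norm_p_pow, hxn,
      norm_int_unit p _ (by
        intro hd
        have h0 : α m - β m ≠ 0 := sub_ne_zero_of_ne hne
        have hle := Int.le_of_dvd (abs_pos.mpr h0) ((dvd_abs _ _).mpr hd)
        have h1 := (hα m).1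
        have h2 := (hα m).2
        have h3 := (hβ m).1
        have h4 := (hβ m).2
        have habs : |α m - β m| ≤ (p:ℤ) - 2 := abs_le.mpr ⟨by omega, by omega⟩
        linarith)]
    ring
  have hEe : E = e m := by rw [hE, hef, min_self]
  rw [hdnorm, ← hEe] at hDnorm
  exact absurd hDnorm (not_le_of_gt hlt)

lemma exists_periodic' (hq1 : 1 < q) (hqp : q < p)
    (ψ : ℕ → ℕ) (hψ : StrictMono ψ) (a : ℕ → ℤ)
    (ha : ∀ n, 1 ≤ a n ∧ a n ≤ (p : ℤ) - 1) (r : ℚ)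
    (hr : (r : ℚ_[p]) = ∑' n, ((a n : ℚ_[p]) * (p : ℚ_[p]) ^ ψ n * ((q : ℚ_[p])⁻¹) ^ n)) :
    ∃ N M : ℕ, N < M ∧ ∀ m, a (N + m) = a (M + m) ∧ ψ (N + m) + ψ M = ψ (M + m) + ψ N := by
  have hppos : (0:ℝ) < p := by exact_mod_cast hp.out.pos
  set x : ℚ_[p] := ((q : ℚ_[p]))⁻¹ with hxdef
  have hx : ‖x‖ = 1 := norm_q_inv' p q hq1 hqp
  have hq0 : (q : ℚ_[p]) ≠ 0 := by
    intro h0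
    have : ‖x‖ = 0 := by rw [hxdef, h0, inv_zero, norm_zero]
    rw [hx] at this; norm_num at this
  have hqx : (q : ℚ_[p]) * x = 1 := mul_inv_cancel₀ hq0
  set T : ℕ → ℚ_[p] := fun N => ∑' m, ((a (N + m) : ℚ_[p]) * (p:ℚ_[p]) ^ (ψ (N + m)) * x ^ m)
    with hTdef
  have hTsum : ∀ N, Summable (fun m => ((a (N + m) : ℚ_[p]) * (p:ℚ_[p]) ^ (ψ (N + m)) * x ^ m)) :=
    fun N => summable_series' p (fun m => a (N + m)) (fun m => ψ (N + m))
      (fun m => le_trans (Nat.le_add_left m N) (hψ.le_apply)) x hx.le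
  have hT0 : (r : ℚ_[p]) = T 0 := by
    rw [hr, hTdef]
    exact tsum_congr (fun n => by rw [Nat.zero_add])
  have hTrec : ∀ N, T N = (a N : ℚ_[p]) * (p:ℚ_[p]) ^ (ψ N) + x * T (N + 1) := by
    intro N
    have h1 := Summable.tsum_eq_zero_add (hTsum N)
    rw [hTdef]
    simp only
    rw [h1]
    congr 1
    · simp
    · rw [← tsum_mul_left]
      apply tsum_congr
      intro m
      rw [show N + (m + 1) = (N + 1) + m from by omega, pow_succ]
      ring
  -- rational shadow sequence
  set t : ℕ → ℚ := fun N => Nat.rec (motive := fun _ => ℚ) r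
    (fun k tk => q * (tk - a k * p ^ ψ k)) N with htdef
  have ht_succ : ∀ N, t (N + 1) = q * (t N - a N * p ^ ψ N) := fun N => rfl
  have ht : ∀ N, ((t N : ℚ) : ℚ_[p]) = T N := by
    intro N
    induction N with
    | zero => rw [show t 0 = r from rfl, ← hT0]
    | succ N ih =>
      rw [ht_succ N]
      push_cast
      rw [ih, hTrec N]
      calc (q:ℚ_[p]) * ((a N:ℚ_[p]) * (p:ℚ_[p])^(ψ N) + x * T (N+1) - (a N:ℚ_[p]) * (p:ℚ_[p])^(ψ N))
          = ((q:ℚ_[p]) * x) * T (N+1) := by ring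
        _ = T (N+1) := by rw [hqx, one_mul]
  set v : ℤ := (r.den : ℤ) with hvdef
  have hv1 : 1 ≤ v := by have h := r.pos; omega
  set w : ℕ → ℤ := fun N => Nat.rec (motive := fun _ => ℤ) r.num
    (fun k wk => q * (wk - v * a k * p ^ ψ k)) N with hwdef
  have hw_succ : ∀ N, w (N + 1) = q * (w N - v * a N * p ^ ψ N) := fun N => rfl
  have hw : ∀ N, ((w N : ℤ) : ℚ) = v * t N := by
    intro N
    induction N with
    | zero =>
      show ((r.num : ℚ)) = v * t 0
      rw [show t 0 = r from rfl, hvdef]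
      push_cast
      rw [eq_comm, mul_comm]
      exact Rat.mul_den_eq_num r
    | succ N ih =>
      rw [hw_succ N, ht_succ N]
      push_cast
      rw [ih]
      push_cast
      ring
  have hTnorm : ∀ N, ‖T N‖ ≤ (p:ℝ) ^ (-(ψ N : ℤ)) := by
    intro N
    apply norm_tsum_le_of'
    · positivity
    · intro m
      calc ‖(a (N + m) : ℚ_[p]) * (p:ℚ_[p]) ^ (ψ (N + m)) * x ^ m‖
          ≤ (p:ℝ) ^ (-(ψ (N + m) : ℤ)) := norm_term_le' p _ _ _
            (by rw [norm_pow, hx, one_pow])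
        _ ≤ (p:ℝ) ^ (-(ψ N : ℤ)) := by
            apply zpow_le_zpow_right₀ (by exact_mod_cast hp.out.one_le)
            have := hψ.monotone (Nat.le_add_right N m)
            omega
  have hdvd : ∀ N, ((p:ℤ) ^ (ψ N)) ∣ w N := by
    intro N
    have hcast : ((w N : ℤ) : ℚ_[p]) = (v : ℚ_[p]) * T N := by
      have : ((w N : ℤ) : ℚ_[p]) = (((w N : ℤ) : ℚ) : ℚ_[p]) := by push_cast; ring
      rw [this, hw N]
      push_cast
      rw [ht N]
    have hnorm : ‖((w N : ℤ) : ℚ_[p])‖ ≤ (p:ℝ) ^ (-(ψ N : ℤ)) := by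
      rw [hcast, norm_mul]
      calc ‖(v : ℚ_[p])‖ * ‖T N‖ ≤ 1 * ((p:ℝ) ^ (-(ψ N : ℤ))) := by
            apply mul_le_mul _ (hTnorm N) (norm_nonneg _) zero_le_one
            exact_mod_cast Padic.norm_int_le_one (p := p) v
        _ = (p:ℝ) ^ (-(ψ N : ℤ)) := one_mul _
    have := (Padic.norm_int_le_pow_iff_dvd (p := p) (w N) (ψ N)).mp hnorm
    exact_mod_cast this
  set c : ℕ → ℤ := fun N => w N / (p:ℤ) ^ (ψ N) with hcdef
  have hc : ∀ N, (p:ℤ) ^ (ψ N) * c N = w N := fun N => Int.mul_ediv_cancel' (hdvd N)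
  have hrec : ∀ N, (p:ℤ) ^ (ψ (N+1) - ψ N) * c (N + 1) = q * (c N - v * a N) := by
    intro N
    have hlt : ψ N < ψ (N + 1) := hψ (Nat.lt_succ_self N)
    have hsplit : (p:ℤ) ^ (ψ (N+1)) = (p:ℤ) ^ (ψ N) * (p:ℤ) ^ (ψ (N+1) - ψ N) := by
      rw [← pow_add]
      congr 1
      omega
    have hppos' : (0:ℤ) < (p:ℤ) := by exact_mod_cast hp.out.pos
    have hp0 : ((p:ℤ) ^ (ψ N)) ≠ 0 := by positivity
    apply mul_left_cancel₀ hp0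
    calc (p:ℤ) ^ ψ N * ((p:ℤ) ^ (ψ (N+1) - ψ N) * c (N + 1))
        = (p:ℤ) ^ (ψ (N+1)) * c (N+1) := by rw [hsplit]; ring
      _ = w (N + 1) := hc (N+1)
      _ = q * (w N - v * a N * p ^ ψ N) := hw_succ N
      _ = q * ((p:ℤ) ^ (ψ N) * c N - v * a N * p ^ ψ N) := by rw [hc N]
      _ = (p:ℤ) ^ ψ N * (q * (c N - v * a N)) := by push_cast; ring
  -- boundedness of c
  set C : ℤ := max |c 0| (q * v * p) with hCdef
  have hCb : ∀ N, |c N| ≤ C := by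
    intro N
    induction N with
    | zero => exact le_max_left _ _
    | succ N ih =>
      have hq' : (1:ℤ) < q := by exact_mod_cast hq1
      have hqp' : (q:ℤ) < p := by exact_mod_cast hqp
      have hδ : 1 ≤ ψ (N+1) - ψ N := by
        have := hψ (show N < N + 1 by omega)
        omega
      have hplep : (p:ℤ) ≤ (p:ℤ) ^ (ψ (N+1) - ψ N) := by
        calc (p:ℤ) = (p:ℤ) ^ 1 := (pow_one _).symm
          _ ≤ _ := pow_le_pow_right₀ (by exact_mod_cast hp.out.one_le) hδ
      have key : (p:ℤ) * |c (N+1)| ≤ q * (|c N| + v * ((p:ℤ) - 1)) := by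
        have h1 : (p:ℤ) * |c (N+1)| ≤ (p:ℤ) ^ (ψ (N+1) - ψ N) * |c (N+1)| := by
          apply mul_le_mul_of_nonneg_right hplep (abs_nonneg _)
        have h2 : (p:ℤ) ^ (ψ (N+1) - ψ N) * |c (N+1)| = |q * (c N - v * a N)| := by
          rw [← abs_of_nonneg (show (0:ℤ) ≤ (p:ℤ)^(ψ (N+1) - ψ N) by positivity), ← abs_mul,
            hrec N]
        have h3 : |q * (c N - v * a N)| ≤ q * (|c N| + v * ((p:ℤ) - 1)) := by
          rw [abs_mul, abs_of_nonneg (show (0:ℤ) ≤ (q:ℤ) by positivity)]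
          apply mul_le_mul_of_nonneg_left _ (by positivity)
          calc |c N - v * a N| ≤ |c N| + |v * a N| := abs_sub _ _
            _ ≤ |c N| + v * ((p:ℤ) - 1) := by
                have h4 : |v * a N| = v * a N := abs_of_nonneg (by nlinarith [(ha N).1])
                have := (ha N).1
                have := (ha N).2
                nlinarith
        linarith
      have hCge : q * v * p ≤ C := le_max_right _ _
      have habs : 0 ≤ |c N| := abs_nonneg _
      nlinarith [key, ih, hq', hqp', hv1, hCge]
  -- pigeonhole
  have hmem : ∀ N, c N ∈ Finset.Icc (-C) C := by
    intro N
    rw [Finset.mem_Icc]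
    have := hCb N
    rw [abs_le] at this
    exact this
  obtain ⟨N, M, hne, hceq⟩ := Finite.exists_ne_map_eq_of_infinite
    (fun N => (⟨c N, hmem N⟩ : {y // y ∈ Finset.Icc (-C) C}))
  have hceq' : c N = c M := by simpa using hceq
  -- wlog N < M
  -- main conclusion for arbitrary pair with c equal and N < M
  have main : ∀ N M : ℕ, N < M → c N = c M →
      ∃ N' M' : ℕ, N' < M' ∧ ∀ m, a (N' + m) = a (M' + m) ∧
        ψ (N' + m) + ψ M' = ψ (M' + m) + ψ N' := by
    clear hceq' hne hceq N M
    intro N M hNM hceq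
    refine ⟨N, M, hNM, ?_⟩
    have hv0 : (v:ℚ) ≠ 0 := by
      have : (0:ℤ) < v := lt_of_lt_of_le one_pos hv1
      exact_mod_cast ne_of_gt this
    have hrat : t N * (p:ℚ) ^ ψ M = t M * (p:ℚ) ^ ψ N := by
      apply mul_left_cancel₀ hv0
      have f1 : ((w N : ℤ) : ℚ) = (p:ℚ) ^ ψ N * (c N : ℚ) := by exact_mod_cast (hc N).symm
      have f2 : ((w M : ℤ) : ℚ) = (p:ℚ) ^ ψ M * (c M : ℚ) := by exact_mod_cast (hc M).symm
      calc (v:ℚ) * (t N * (p:ℚ) ^ ψ M) = ((w N : ℤ) : ℚ) * (p:ℚ) ^ ψ M := by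
            rw [hw N]; ring
        _ = (p:ℚ) ^ ψ N * (c N : ℚ) * (p:ℚ) ^ ψ M := by rw [f1]
        _ = (p:ℚ) ^ ψ M * (c M : ℚ) * (p:ℚ) ^ ψ N := by rw [hceq]; ring
        _ = ((w M : ℤ) : ℚ) * (p:ℚ) ^ ψ N := by rw [f2]
        _ = (v:ℚ) * (t M * (p:ℚ) ^ ψ N) := by rw [hw M]; ring
    have hpadic : (p:ℚ_[p]) ^ ψ M * T N = (p:ℚ_[p]) ^ ψ N * T M := by
      have hcast := congrArg (fun y : ℚ => (y : ℚ_[p])) hrat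
      simp only [Rat.cast_mul, Rat.cast_pow, Rat.cast_natCast] at hcast
      rw [ht N, ht M] at hcast
      linear_combination hcast
    have hS1 : (p:ℚ_[p]) ^ ψ M * T N
        = ∑' m, ((a (N+m) : ℚ_[p]) * (p:ℚ_[p]) ^ (ψ (N+m) + ψ M) * x ^ m) := by
      rw [hTdef]
      simp only
      rw [← tsum_mul_left]
      exact tsum_congr (fun m => by rw [pow_add]; ring)
    have hS2 : (p:ℚ_[p]) ^ ψ N * T M
        = ∑' m, ((a (M+m) : ℚ_[p]) * (p:ℚ_[p]) ^ (ψ (M+m) + ψ N) * x ^ m) := by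
      rw [hTdef]
      simp only
      rw [← tsum_mul_left]
      exact tsum_congr (fun m => by rw [pow_add]; ring)
    rw [hS1, hS2] at hpadic
    have huniq := digits_unique' p x hx (fun m => a (N+m)) (fun m => a (M+m))
      (fun m => ha _) (fun m => ha _)
      (fun m => ψ (N+m) + ψ M) (fun m => ψ (M+m) + ψ N)
      (fun i j hij => by
        show ψ (N + i) + ψ M < ψ (N + j) + ψ M
        have := hψ (show N + i < N + j by omega)
        omega)
      (fun i j hij => by
        show ψ (M + i) + ψ N < ψ (M + j) + ψ N
        have := hψ (show M + i < M + j by omega)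
        omega)
      hpadic
    intro m
    exact ⟨(huniq m).1, (huniq m).2⟩
  rcases hne.lt_or_gt with h | h
  · exact main N M h hceq'
  · exact main M N h hceq'.symm

end auxiliary

lemma mk_rational_of_periodic' (b : ℕ → ℚ) (N L : ℕ) (hL : 0 < L) (c : ℚ)
    (hper : ∀ n, N ≤ n → b (n + L) = c * b n) :
    ∃ P Q : Polynomial ℚ, Q ≠ 0 ∧
      (Q : PowerSeries ℚ) * (PowerSeries.mk b) = (P : PowerSeries ℚ) := by
  set Q : Polynomial ℚ := 1 - Polynomial.C c * Polynomial.X ^ L with hQdef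
  have hQ0 : Q ≠ 0 := by
    intro h
    have h0 : Q.coeff 0 = 1 := by
      rw [hQdef]
      simp only [Polynomial.coeff_sub, Polynomial.coeff_one, Polynomial.coeff_C_mul,
        Polynomial.coeff_X_pow, if_neg hL.ne, mul_zero, sub_zero, if_pos trivial]
    rw [h] at h0
    simp at h0
  have hcoeff : ∀ k, (PowerSeries.coeff k) ((Q : PowerSeries ℚ) * PowerSeries.mk b)
      = b k - c * (if L ≤ k then b (k - L) else 0) := by
    intro k
    have : (Q : PowerSeries ℚ) = 1 - (PowerSeries.C c) * (PowerSeries.X) ^ L := by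
      rw [hQdef]
      push_cast
      simp
    rw [this, sub_mul, one_mul, map_sub]
    congr 1
    · exact PowerSeries.coeff_mk k b
    · rw [mul_assoc, PowerSeries.coeff_C_mul, PowerSeries.coeff_X_pow_mul' (PowerSeries.mk b) L k]
      simp [PowerSeries.coeff_mk]
  refine ⟨PowerSeries.trunc (N + L) ((Q : PowerSeries ℚ) * PowerSeries.mk b), Q, hQ0, ?_⟩
  apply PowerSeries.ext
  intro k
  rw [Polynomial.coeff_coe, PowerSeries.coeff_trunc]
  by_cases hk : k < N + L
  · simp [hk]
  · rw [if_neg hk, hcoeff k]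
    have hLk : L ≤ k := by omega
    rw [if_pos hLk, show b k = b ((k - L) + L) from by rw [show k - L + L = k from by omega],
      hper (k - L) (by omega)]
    ring

section auxiliary2
variable (p q : ℕ) [hp : Fact p.Prime]

lemma eval_identity' (hq1 : 1 < q) (hqp : q < p)
    (ψ : ℕ → ℕ) (hψ : StrictMono ψ) (a : ℕ → ℤ) (Q P : Polynomial ℚ)
    (hQG : (Q : PowerSeries ℚ) * (PowerSeries.mk fun n => ((a n : ℚ) * (p : ℚ) ^ ψ n))
      = (P : PowerSeries ℚ)) :
    ((Q.eval ((q:ℚ)⁻¹) : ℚ) : ℚ_[p])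
        * (∑' n, ((a n : ℚ_[p]) * (p : ℚ_[p]) ^ ψ n * ((q : ℚ_[p])⁻¹) ^ n))
      = ((P.eval ((q:ℚ)⁻¹) : ℚ) : ℚ_[p]) := by
  set x : ℚ_[p] := ((q : ℚ_[p]))⁻¹ with hxdef
  have hx : ‖x‖ = 1 := norm_q_inv' p q hq1 hqp
  set S : ℚ_[p] := ∑' n, ((a n : ℚ_[p]) * (p : ℚ_[p]) ^ ψ n * x ^ n) with hSdef
  have hsum : Summable (fun n => (a n : ℚ_[p]) * (p:ℚ_[p]) ^ ψ n * x ^ n) :=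
    summable_series' p a ψ (fun n => hψ.le_apply) x hx.le
  set D := Q.natDegree with hDdef
  set F : ℕ → ℕ → ℚ_[p] := fun i n =>
    if i ≤ n then ((Q.coeff i : ℚ) : ℚ_[p]) * ((a (n-i) : ℚ_[p]) * (p:ℚ_[p]) ^ (ψ (n-i)) * x ^ n)
    else 0 with hFdef
  have hFshift : ∀ i, (fun n => F i (n + i))
      = fun n => (((Q.coeff i : ℚ) : ℚ_[p]) * x ^ i)
          * ((a n : ℚ_[p]) * (p:ℚ_[p]) ^ ψ n * x ^ n) := by
    intro i
    funext n
    rw [hFdef]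
    simp only [if_pos (Nat.le_add_left i n), Nat.add_sub_cancel]
    rw [pow_add]
    ring
  have hFsummable : ∀ i, Summable (F i) := by
    intro i
    rw [← summable_nat_add_iff i, hFshift i]
    exact hsum.mul_left _
  have hFtsum : ∀ i, ∑' n, F i n = ((Q.coeff i : ℚ) : ℚ_[p]) * x ^ i * S := by
    intro i
    rw [← Summable.sum_add_tsum_nat_add i (hFsummable i)]
    have h0 : ∑ n ∈ range i, F i n = 0 := by
      apply Finset.sum_eq_zero
      intro n hn
      rw [hFdef]
      exact if_neg (by have := Finset.mem_range.mp hn; omega)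
    rw [h0, zero_add, hFshift i, tsum_mul_left]
  have h3 : ∀ n, ∑ i ∈ range (D+1), F i n
      = ((PowerSeries.coeff n ((Q : PowerSeries ℚ)
          * (PowerSeries.mk fun k => ((a k : ℚ) * (p : ℚ) ^ ψ k))) : ℚ) : ℚ_[p]) * x ^ n := by
    intro n
    rw [PowerSeries.coeff_mul, Finset.Nat.sum_antidiagonal_eq_sum_range_succ_mk]
    simp only [Polynomial.coeff_coe, PowerSeries.coeff_mk]
    rw [Rat.cast_sum, Finset.sum_mul]
    have hR : ∑ k ∈ range (n+1),
        ((((Q.coeff k * ((a (n-k) : ℚ) * (p:ℚ) ^ ψ (n-k))) : ℚ)) : ℚ_[p]) * x ^ n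
        = ∑ k ∈ range (n+1), F k n := by
      apply Finset.sum_congr rfl
      intro k hk
      have hkn : k ≤ n := by have := Finset.mem_range.mp hk; omega
      have hFv : F k n
          = ((Q.coeff k : ℚ) : ℚ_[p]) * ((a (n-k) : ℚ_[p]) * (p:ℚ_[p]) ^ (ψ (n-k)) * x ^ n) :=
        if_pos hkn
      rw [hFv]
      push_cast
      ring
    have hExt1 : ∑ k ∈ range (n+1), F k n = ∑ k ∈ range (max (D+1) (n+1)), F k n := by
      apply Finset.sum_subset (Finset.range_subset_range.mpr (le_max_right _ _))
      intro k _ hk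
      rw [Finset.mem_range] at hk
      exact if_neg (by omega)
    have hExt2 : ∑ i ∈ range (D+1), F i n = ∑ i ∈ range (max (D+1) (n+1)), F i n := by
      apply Finset.sum_subset (Finset.range_subset_range.mpr (le_max_left _ _))
      intro i _ hi
      rw [Finset.mem_range] at hi
      have hcoeff0 : Q.coeff i = 0 :=
        Polynomial.coeff_eq_zero_of_natDegree_lt (by omega)
      by_cases hin : i ≤ n
      · have hFv : F i n
            = ((Q.coeff i : ℚ) : ℚ_[p]) * ((a (n-i) : ℚ_[p]) * (p:ℚ_[p]) ^ (ψ (n-i)) * x ^ n) :=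
          if_pos hin
        rw [hFv, hcoeff0]
        simp
      · exact if_neg hin
    rw [hR, hExt1, hExt2]
  have hQeval : ((Q.eval ((q:ℚ)⁻¹) : ℚ) : ℚ_[p])
      = ∑ i ∈ range (D+1), ((Q.coeff i : ℚ) : ℚ_[p]) * x ^ i := by
    rw [Polynomial.eval_eq_sum_range]
    push_cast
    rw [← hxdef]
  have hPeval : ((P.eval ((q:ℚ)⁻¹) : ℚ) : ℚ_[p])
      = ∑ n ∈ range (P.natDegree + 1), ((P.coeff n : ℚ) : ℚ_[p]) * x ^ n := by
    rw [Polynomial.eval_eq_sum_range]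
    push_cast
    rw [← hxdef]
  calc ((Q.eval ((q:ℚ)⁻¹) : ℚ) : ℚ_[p]) * S
      = (∑ i ∈ range (D+1), ((Q.coeff i : ℚ) : ℚ_[p]) * x ^ i) * S := by rw [hQeval]
    _ = ∑ i ∈ range (D+1), ((Q.coeff i : ℚ) : ℚ_[p]) * x ^ i * S := Finset.sum_mul _ _ _
    _ = ∑ i ∈ range (D+1), ∑' n, F i n := by
        exact Finset.sum_congr rfl (fun i _ => (hFtsum i).symm)
    _ = ∑' n, ∑ i ∈ range (D+1), F i n := (Summable.tsum_finsetSum (fun i _ => hFsummable i)).symm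
    _ = ∑' n, ((PowerSeries.coeff n ((Q : PowerSeries ℚ)
          * (PowerSeries.mk fun k => ((a k : ℚ) * (p : ℚ) ^ ψ k))) : ℚ) : ℚ_[p]) * x ^ n :=
        tsum_congr h3
    _ = ∑' n, ((P.coeff n : ℚ) : ℚ_[p]) * x ^ n := by
        simp only [hQG, Polynomial.coeff_coe]
    _ = ∑ n ∈ range (P.natDegree + 1), ((P.coeff n : ℚ) : ℚ_[p]) * x ^ n := by
        apply tsum_eq_sum
        intro n hn
        rw [Finset.mem_range] at hn
        rw [Polynomial.coeff_eq_zero_of_natDegree_lt (by omega)]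
        simp
    _ = ((P.eval ((q:ℚ)⁻¹) : ℚ) : ℚ_[p]) := hPeval.symm
lemma rational_of_QG (hq1 : 1 < q) (hqp : q < p)
    (ψ : ℕ → ℕ) (hψ : StrictMono ψ) (a : ℕ → ℤ) :
    ∀ D : ℕ, ∀ Q P : Polynomial ℚ, Q ≠ 0 → Q.natDegree ≤ D →
    ((Q : PowerSeries ℚ) * (PowerSeries.mk fun n => ((a n : ℚ) * (p : ℚ) ^ ψ n))
      = (P : PowerSeries ℚ)) →
    (∑' n, ((a n : ℚ_[p]) * (p : ℚ_[p]) ^ ψ n * ((q : ℚ_[p])⁻¹) ^ n))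
      ∈ Set.range ((↑) : ℚ → ℚ_[p]) := by
  have finish : ∀ Q P : Polynomial ℚ,
      ((Q : PowerSeries ℚ) * (PowerSeries.mk fun n => ((a n : ℚ) * (p : ℚ) ^ ψ n))
        = (P : PowerSeries ℚ)) → Q.eval ((q:ℚ)⁻¹) ≠ 0 →
      (∑' n, ((a n : ℚ_[p]) * (p : ℚ_[p]) ^ ψ n * ((q : ℚ_[p])⁻¹) ^ n))
        ∈ Set.range ((↑) : ℚ → ℚ_[p]) := by
    intro Q P hQG he
    have hid := eval_identity' p q hq1 hqp ψ hψ a Q P hQG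
    refine ⟨P.eval ((q:ℚ)⁻¹) / Q.eval ((q:ℚ)⁻¹), ?_⟩
    have hc : ((Q.eval ((q:ℚ)⁻¹) : ℚ) : ℚ_[p]) ≠ 0 := by
      exact_mod_cast (Rat.cast_ne_zero (α := ℚ_[p])).mpr he
    rw [Rat.cast_div, div_eq_iff hc]
    linear_combination -hid
  intro D
  induction D with
  | zero =>
    intro Q P hQ0 hdeg hQG
    have hc := Polynomial.eq_C_of_natDegree_eq_zero (Nat.le_zero.mp hdeg)
    apply finish Q P hQG
    rw [hc, Polynomial.eval_C]
    intro h0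
    apply hQ0
    rw [hc, h0, map_zero]
  | succ D ih =>
    intro Q P hQ0 hdeg hQG
    by_cases he : Q.eval ((q:ℚ)⁻¹) = 0
    · have hid := eval_identity' p q hq1 hqp ψ hψ a Q P hQG
      have hPe : P.eval ((q:ℚ)⁻¹) = 0 := by
        have h0 : ((P.eval ((q:ℚ)⁻¹) : ℚ) : ℚ_[p]) = 0 := by
          rw [← hid, he]
          simp
        exact_mod_cast h0
      obtain ⟨Q₁, hQ₁⟩ := Polynomial.dvd_iff_isRoot.mpr he
      obtain ⟨P₁, hP₁⟩ := Polynomial.dvd_iff_isRoot.mpr hPe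
      have hXC : (Polynomial.X - Polynomial.C ((q:ℚ)⁻¹)) ≠ 0 :=
        Polynomial.X_sub_C_ne_zero _
      have hQ₁0 : Q₁ ≠ 0 := by
        rintro rfl
        rw [mul_zero] at hQ₁
        exact hQ0 hQ₁
      have hdeg' : Q₁.natDegree ≤ D := by
        have hnd := Polynomial.natDegree_mul hXC hQ₁0
        rw [hQ₁, hnd, Polynomial.natDegree_X_sub_C] at hdeg
        omega
      have hQG' : (Q₁ : PowerSeries ℚ)
          * (PowerSeries.mk fun n => ((a n : ℚ) * (p : ℚ) ^ ψ n)) = (P₁ : PowerSeries ℚ) := by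
      -- factor out X - C
        rw [hQ₁, hP₁] at hQG
        rw [Polynomial.coe_mul, Polynomial.coe_mul] at hQG
        have hcast : ((Polynomial.X - Polynomial.C ((q:ℚ)⁻¹) : Polynomial ℚ) : PowerSeries ℚ)
            * ((Q₁ : PowerSeries ℚ)
              * (PowerSeries.mk fun n => ((a n : ℚ) * (p : ℚ) ^ ψ n)) - (P₁ : PowerSeries ℚ))
            = 0 := by linear_combination hQG
        rcases mul_eq_zero.mp hcast with h | h
        · exact absurd (Polynomial.coe_eq_zero_iff.mp h) hXC
        · exact sub_eq_zero.mp h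
      exact ih Q₁ P₁ hQ₁0 hdeg' hQG'
    · exact finish Q P hQG he


end auxiliary2

/-- Let `p` be prime, `q` an integer with `1 < q < p`, `ψ : ℕ → ℕ` strictly increasing and
`(a n)` integers with `1 ≤ a n ≤ p - 1`. The formal power series
`G(T) = Σ a_n p^{ψ(n)} T^n ∈ ℚ[[T]]` is rational iff the p-adic sum
`Σ a_n p^{ψ(n)} q^{-n} ∈ ℚ_p` is a rational number. -/
theorem stmt1 (p q : ℕ) [Fact p.Prime] (hq1 : 1 < q) (hqp : q < p)
    (ψ : ℕ → ℕ) (hψ : StrictMono ψ) (a : ℕ → ℤ)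
    (ha : ∀ n, 1 ≤ a n ∧ a n ≤ (p : ℤ) - 1) :
    (∃ P Q : Polynomial ℚ, Q ≠ 0 ∧
        (Q : PowerSeries ℚ) * (PowerSeries.mk fun n => ((a n : ℚ) * (p : ℚ) ^ ψ n)) =
          (P : PowerSeries ℚ)) ↔
      (∑' n : ℕ, ((a n : ℚ_[p]) * (p : ℚ_[p]) ^ ψ n * ((q : ℚ_[p])⁻¹) ^ n)) ∈
        Set.range ((↑) : ℚ → ℚ_[p]) := by
  constructor
  · rintro ⟨P, Q, hQ0, hQG⟩
    exact rational_of_QG p q hq1 hqp ψ hψ a Q.natDegree Q P hQ0 le_rfl hQG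
  · rintro ⟨r, hr⟩
    obtain ⟨N, M, hNM, hper⟩ := exists_periodic' p q hq1 hqp ψ hψ a ha r hr
    have hperiodic : ∀ n, N ≤ n → (fun n => ((a n : ℚ) * (p : ℚ) ^ ψ n)) (n + (M - N))
        = ((p:ℚ) ^ (ψ M - ψ N)) * (fun n => ((a n : ℚ) * (p : ℚ) ^ ψ n)) n := by
      intro n hn
      obtain ⟨h1, h2⟩ := hper (n - N)
      have hNn : N + (n - N) = n := by omega
      have hMn : M + (n - N) = n + (M - N) := by omega
      rw [hNn, hMn] at h1 h2
      have hψNM : ψ N ≤ ψ M := hψ.monotone (le_of_lt hNM)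
      have hψe : ψ (n + (M - N)) = ψ n + (ψ M - ψ N) := by omega
      simp only
      rw [← h1, hψe, pow_add]
      ring
    obtain ⟨P, Q, hQ0, hQG⟩ := mk_rational_of_periodic'
      (fun n => ((a n : ℚ) * (p : ℚ) ^ ψ n)) N (M - N) (by omega) ((p:ℚ) ^ (ψ M - ψ N))
      hperiodic
    exact ⟨P, Q, hQ0, hQG⟩
end

section
/- For every u ∈ ℤ_p, if φ_{p,q}(u) is rational then u is rational; that is, φ_{p,q}^{−1}(ℚ ∩ ℤ_p) ⊆ ℚ ∩ ℤ_p. -/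
open scoped Classical

set_option maxHeartbeats 1000000

/-- `φ_{p,q}(u) = Σ ε₀(-q·g^n(u)) p^n`, for a given iteration map `g`. -/
noncomputable def phi (p q : ℕ) [Fact p.Prime] (g : ℤ_[p] → ℤ_[p]) (u : ℤ_[p]) : ℤ_[p] :=
  ∑' n : ℕ, (eps0 (-((q : ℤ_[p]) * g^[n] u)) : ℤ_[p]) * (p : ℤ_[p]) ^ n

namespace Stmt2Aux

variable {p : ℕ} [hp : Fact p.Prime]

lemma toZMod_eq_zero_iff (x : ℤ_[p]) : PadicInt.toZMod x = 0 ↔ (p:ℤ_[p]) ∣ x := by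
  rw [← RingHom.mem_ker, PadicInt.ker_toZMod, PadicInt.maximalIdeal_eq_span_p,
    Ideal.mem_span_singleton]

lemma summable_aux (a : ℕ → ℕ) :
    Summable (fun n => (a n : ℤ_[p]) * (p:ℤ_[p]) ^ n) := by
  apply Summable.of_norm_bounded (g := fun n => ((p:ℝ)⁻¹) ^ n)
  · apply summable_geometric_of_lt_one (by positivity)
    rw [inv_lt_one_iff₀]
    right; exact_mod_cast (Fact.out : p.Prime).one_lt
  · intro n
    rw [norm_mul, norm_pow, PadicInt.norm_p]
    calc ‖(a n : ℤ_[p])‖ * ((p:ℝ)⁻¹)^n ≤ 1 * ((p:ℝ)⁻¹)^n := by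
          apply mul_le_mul_of_nonneg_right (PadicInt.norm_le_one _) (by positivity)
      _ = _ := one_mul _

lemma pcast_ne_zero : (p : ℤ_[p]) ≠ 0 :=
  Nat.cast_ne_zero.mpr (Fact.out : p.Prime).pos.ne'

lemma pcast_ne_zeroQ : (p : ℚ_[p]) ≠ 0 :=
  Nat.cast_ne_zero.mpr (Fact.out : p.Prime).pos.ne'

end Stmt2Aux

open Stmt2Aux in
/-- If `φ_{p,q}(u)` is rational then `u` is rational:
`φ_{p,q}⁻¹(ℚ ∩ ℤ_p) ⊆ ℚ ∩ ℤ_p`. -/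
theorem stmt2 (p q : ℕ) [Fact p.Prime] (hq : 0 < q) (hpq : Nat.Coprime p q)
    (g : ℤ_[p] → ℤ_[p])
    (hg : ∀ u : ℤ_[p], (p : ℤ_[p]) * g u =
      if (p : ℤ_[p]) ∣ u then u
      else (q : ℤ_[p]) * u + (eps0 (-((q : ℤ_[p]) * u)) : ℤ_[p]))
    (u : ℤ_[p])
    (h : ((phi p q g u : ℤ_[p]) : ℚ_[p]) ∈ Set.range ((↑) : ℚ → ℚ_[p])) :
    (u : ℚ_[p]) ∈ Set.range ((↑) : ℚ → ℚ_[p]) := by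
  have hp' : p.Prime := Fact.out
  have hp1 : 1 < p := hp'.one_lt
  obtain ⟨r0, hr0⟩ := h
  -- opaque digit sequence and tail sums
  obtain ⟨a, ha⟩ : ∃ a : ℕ → ℕ, ∀ n, a n = eps0 (-((q:ℤ_[p]) * g^[n] u)) :=
    ⟨_, fun _ => rfl⟩
  obtain ⟨x, hxn⟩ : ∃ x : ℕ → ℤ_[p], ∀ n, x n = ∑' k, (a (n+k) : ℤ_[p]) * (p:ℤ_[p]) ^ k :=
    ⟨_, fun _ => rfl⟩
  -- digits are < p
  have hax : ∀ n, a n < p := fun n => by rw [ha]; exact ZMod.val_lt _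
  -- x 0 is phi of u
  have hx0 : x 0 = phi p q g u := by
    rw [hxn 0]
    simp only [phi]
    exact tsum_congr (fun k => by rw [ha, zero_add])
  -- fundamental recurrence for x
  have hrec : ∀ n, x n = (a n : ℤ_[p]) + (p:ℤ_[p]) * x (n+1) := by
    intro n
    have hs := summable_aux (p := p) (fun k => a (n+k))
    rw [hxn n, hxn (n+1)]
    rw [Summable.tsum_eq_zero_add hs]
    simp only [add_zero, pow_zero, mul_one]
    congr 1
    calc (∑' b : ℕ, (a (n+(b+1)) : ℤ_[p]) * (p:ℤ_[p]) ^ (b+1))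
        = ∑' b : ℕ, (p:ℤ_[p]) * ((a ((n+1)+b) : ℤ_[p]) * (p:ℤ_[p]) ^ b) :=
          tsum_congr (fun b => by rw [show n+(b+1) = (n+1)+b by ring]; ring)
      _ = (p:ℤ_[p]) * ∑' b : ℕ, (a ((n+1)+b) : ℤ_[p]) * (p:ℤ_[p]) ^ b :=
          (summable_aux (p := p) (fun b => a ((n+1)+b))).tsum_mul_left (p:ℤ_[p])
  -- the orbit recurrence
  obtain ⟨c, hc⟩ : ∃ c : ℕ → ℕ, ∀ j, c j = if a j = 0 then 1 else q := ⟨_, fun _ => rfl⟩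
  have hdvd : ∀ j, ((p:ℤ_[p]) ∣ g^[j] u) ↔ a j = 0 := by
    intro j
    rw [ha]
    simp only [eps0]
    rw [ZMod.val_eq_zero, toZMod_eq_zero_iff]
    have hqu : IsUnit (q:ℤ_[p]) := by
      rw [PadicInt.isUnit_iff]
      refine le_antisymm (PadicInt.norm_le_one _) (not_lt.mp ?_)
      rw [show ((q:ℤ_[p])) = ((q:ℤ):ℤ_[p]) by push_cast; ring,
        PadicInt.norm_int_lt_one_iff_dvd, Int.natCast_dvd_natCast]
      exact hp'.coprime_iff_not_dvd.mp hpq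
    rw [dvd_neg, hqu.dvd_mul_left]
  have hstep : ∀ j, (p:ℤ_[p]) * g^[j+1] u = (c j : ℤ_[p]) * g^[j] u + (a j : ℤ_[p]) := by
    intro j
    rw [Function.iterate_succ_apply', hg (g^[j] u), ← ha j]
    by_cases hd : (p:ℤ_[p]) ∣ g^[j] u
    · rw [if_pos hd, hc]
      simp only [(hdvd j).mp hd, if_pos rfl]
      push_cast [(hdvd j).mp hd]
      ring
    · rw [if_neg hd, hc]
      have h0 : ¬ a j = 0 := fun h0 => hd ((hdvd j).mpr h0)
      simp only [if_neg h0]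

  -- v : orbit in ℚ_p
  obtain ⟨v, hv⟩ : ∃ v : ℕ → ℚ_[p], ∀ j, v j = ((g^[j] u : ℤ_[p]) : ℚ_[p]) :=
    ⟨_, fun _ => rfl⟩
  have hvnorm : ∀ j, ‖v j‖ ≤ 1 := fun j => by rw [hv]; exact PadicInt.norm_le_one _
  have hstepQ : ∀ j, (p:ℚ_[p]) * v (j+1) = (c j : ℚ_[p]) * v j + (a j : ℚ_[p]) := by
    intro j
    rw [hv, hv]
    have := congrArg (fun z : ℤ_[p] => (z : ℚ_[p])) (hstep j)
    push_cast at this ⊢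
    exact this
  -- rationality with bounded integral numerators
  obtain ⟨d, hd0, k0, hk0⟩ : ∃ d : ℕ, 0 < d ∧ ∃ k0 : ℤ,
      ((d:ℚ_[p]) * ((x 0 : ℤ_[p]) : ℚ_[p])) = (k0 : ℚ_[p]) := by
    refine ⟨r0.den, r0.pos, r0.num, ?_⟩
    rw [hx0, ← hr0]
    rw [show ((r0.num : ℚ_[p])) = ((r0.num : ℚ) : ℚ_[p]) by push_cast; ring,
      show ((r0.den : ℚ_[p])) = ((r0.den : ℚ) : ℚ_[p]) by push_cast; ring]
    rw [← Padic.coe_mul]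
    congr 1
    rw [mul_comm]
    exact_mod_cast Rat.mul_den_eq_num r0
  set K : ℤ := max |k0| (d * p) with hK
  have hKd : (d : ℤ) * (p - 1) ≤ K := by
    have : (d:ℤ) * (p-1) ≤ (d:ℤ) * p := by nlinarith [Int.natCast_pos.mpr hd0]
    calc (d:ℤ) * (p-1) ≤ (d:ℤ)*p := this
      _ ≤ K := by rw [hK]; push_cast; exact le_max_right _ _
  have hrecQ : ∀ n, ((x (n+1) : ℤ_[p]) : ℚ_[p]) =
      (((x n : ℤ_[p]) : ℚ_[p]) - (a n : ℚ_[p])) / (p : ℚ_[p]) := by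
    intro n
    have := congrArg (fun z : ℤ_[p] => (z : ℚ_[p])) (hrec n)
    push_cast at this
    rw [eq_div_iff (pcast_ne_zeroQ (p := p)), this]
    ring
  have key : ∀ n, ∃ k : ℤ, ((d:ℚ_[p]) * ((x n : ℤ_[p]) : ℚ_[p])) = (k : ℚ_[p]) ∧ |k| ≤ K := by
    intro n
    induction n with
    | zero => exact ⟨k0, hk0, by rw [hK]; exact le_max_left _ _⟩
    | succ n ih =>
      obtain ⟨k, hkx, hkb⟩ := ih
      -- p divides k - d * a n
      have hnorm : ‖((k - (d:ℤ) * (a n) : ℤ) : ℚ_[p])‖ ≤ (p:ℝ) ^ (-(1:ℕ) : ℤ) := by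
        have e1 : ((k - (d:ℤ) * (a n) : ℤ) : ℚ_[p]) = (p:ℚ_[p]) * ((d:ℚ_[p]) * ((x (n+1) : ℤ_[p]) : ℚ_[p])) := by
          rw [hrecQ n]
          push_cast
          rw [← hkx]
          field_simp [pcast_ne_zeroQ (p := p)]
        rw [e1, norm_mul]
        have h2 : ‖(p:ℚ_[p])‖ = ((p:ℝ))⁻¹ := Padic.norm_p
        have h3 : ‖(d:ℚ_[p]) * ((x (n+1) : ℤ_[p]) : ℚ_[p])‖ ≤ 1 := by
          rw [norm_mul]
          have := PadicInt.norm_le_one (x (n+1))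
          have hd1 : ‖(d:ℚ_[p])‖ ≤ 1 := by
            rw [show ((d:ℚ_[p])) = ((d:ℤ):ℚ_[p]) by push_cast; ring]
            exact Padic.norm_int_le_one _
          calc ‖(d:ℚ_[p])‖ * ‖((x (n+1) : ℤ_[p]) : ℚ_[p])‖ ≤ 1 * 1 := by
                apply mul_le_mul hd1 (PadicInt.norm_le_one _) (norm_nonneg _) zero_le_one
            _ = 1 := one_mul 1
        calc ‖(p:ℚ_[p])‖ * ‖(d:ℚ_[p]) * ((x (n+1) : ℤ_[p]) : ℚ_[p])‖
            ≤ ‖(p:ℚ_[p])‖ * 1 := by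
              apply mul_le_mul_of_nonneg_left h3 (norm_nonneg _)
          _ = (p:ℝ)⁻¹ := by rw [mul_one, h2]
          _ = (p:ℝ) ^ (-(1:ℕ) : ℤ) := by
              rw [zpow_neg]
              norm_num
      have hdvdp : ((p:ℤ) ^ (1:ℕ)) ∣ (k - (d:ℤ) * (a n)) :=
        (Padic.norm_int_le_pow_iff_dvd _ _).mp hnorm
      rw [pow_one] at hdvdp
      obtain ⟨k', hk'⟩ := hdvdp
      refine ⟨k', ?_, ?_⟩
      · rw [hrecQ n]
        have e2 : ((k':ℚ_[p])) * (p:ℚ_[p]) = (k:ℚ_[p]) - (d:ℚ_[p]) * (a n : ℚ_[p]) := by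
          have := congrArg (fun z : ℤ => ((z:ℚ_[p]))) hk'
          push_cast at this
          rw [this]; ring
        rw [← hkx] at e2
        field_simp [pcast_ne_zeroQ (p := p)]
        linear_combination -e2
      · -- |k'| ≤ K
        have habs : (p:ℤ) * |k'| = |k - (d:ℤ) * (a n)| := by
          rw [hk', abs_mul, abs_of_nonneg (by positivity : (0:ℤ) ≤ (p:ℤ))]
        have h4 : |k - (d:ℤ) * (a n)| ≤ |k| + (d:ℤ) * (p - 1) := by
          have h5 : |(d:ℤ) * (a n)| ≤ (d:ℤ) * (p-1) := by
            rw [abs_mul, abs_of_nonneg (by positivity : (0:ℤ) ≤ (d:ℤ)),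
              abs_of_nonneg (by positivity : (0:ℤ) ≤ ((a n : ℕ):ℤ))]
            have := hax n
            have : ((a n : ℕ):ℤ) ≤ (p:ℤ) - 1 := by omega
            nlinarith [Int.natCast_pos.mpr hd0]
          calc |k - (d:ℤ) * (a n)| ≤ |k| + |(d:ℤ) * (a n)| := abs_sub _ _
            _ ≤ |k| + (d:ℤ) * (p-1) := by linarith
        have hple : (p:ℤ) * |k'| ≤ K + (p - 1) * K := by
          rw [habs]
          have hK1 : (d:ℤ) * (p-1) ≤ (p-1) * K := by
            have h6 : (d:ℤ) ≤ K := by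
              have : (d:ℤ) ≤ (d:ℤ) * p := by nlinarith [Int.natCast_pos.mpr hd0, (by exact_mod_cast hp1 : (1:ℤ) < p)]
              calc (d:ℤ) ≤ (d:ℤ)*p := this
                _ ≤ K := by rw [hK]; push_cast; exact le_max_right _ _
            nlinarith [(by exact_mod_cast hp1 : (1:ℤ) < p)]
          linarith
        have : (p:ℤ) * |k'| ≤ (p:ℤ) * K := by
          calc (p:ℤ) * |k'| ≤ K + (p-1)*K := hple
            _ = (p:ℤ) * K := by ring
        exact le_of_mul_le_mul_left this (by exact_mod_cast hp'.pos)

  -- pigeonhole: two equal tail sums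
  obtain ⟨m, n, hmn, hxeq⟩ : ∃ m n : ℕ, m < n ∧ x m = x n := by
    have hchoice : ∀ n : ℕ, ∃ k : Set.Icc (-K) K,
        ((d:ℚ_[p]) * ((x n : ℤ_[p]) : ℚ_[p])) = ((k : ℤ) : ℚ_[p]) := by
      intro n
      obtain ⟨k, h1, h2⟩ := key n
      exact ⟨⟨k, Set.mem_Icc.mpr (abs_le.mp h2)⟩, h1⟩
    choose f hf using hchoice
    have : Finite (Set.Icc (-K) K) := (Set.finite_Icc _ _).to_subtype
    obtain ⟨i, j, hij, hfeq⟩ := Finite.exists_ne_map_eq_of_infinite f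
    have hxij : x i = x j := by
      have h1 : ((d:ℚ_[p]) * ((x i : ℤ_[p]) : ℚ_[p])) = ((d:ℚ_[p]) * ((x j : ℤ_[p]) : ℚ_[p])) := by
        rw [hf i, hf j, hfeq]
      have hd' : (d:ℚ_[p]) ≠ 0 := Nat.cast_ne_zero.mpr hd0.ne'
      have h2 := mul_left_cancel₀ hd' h1
      exact Subtype.coe_injective h2
    rcases hij.lt_or_gt with hlt | hlt
    · exact ⟨i, j, hlt, hxij⟩
    · exact ⟨j, i, hlt, hxij.symm⟩
  -- equal tail sums propagate digit equality
  have keydigit : ∀ i j, x i = x j → a i = a j ∧ x (i+1) = x (j+1) := by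
    intro i j hij
    have h1 : ((a i : ℤ_[p])) + (p:ℤ_[p]) * x (i+1) = ((a j : ℤ_[p])) + (p:ℤ_[p]) * x (j+1) := by
      rw [← hrec, ← hrec, hij]
    have h2 : ((a i : ZMod p)) = ((a j : ZMod p)) := by
      have := congrArg PadicInt.toZMod h1
      simpa [map_add, map_mul, map_natCast, ZMod.natCast_self] using this
    have h3 : a i = a j := by
      have := congrArg ZMod.val h2
      rwa [ZMod.val_cast_of_lt (hax i), ZMod.val_cast_of_lt (hax j)] at this
    refine ⟨h3, ?_⟩
    rw [h3] at h1
    exact mul_left_cancel₀ (pcast_ne_zero (p := p)) (add_left_cancel h1)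
  have hperx : ∀ j, x (m + j) = x (n + j) := by
    intro j
    induction j with
    | zero => simpa using hxeq
    | succ j ih =>
      have h := (keydigit _ _ ih).2
      rwa [show (m+j)+1 = m+(j+1) by ring, show (n+j)+1 = n+(j+1) by ring] at h
  have hpera : ∀ j, a (m + j) = a (n + j) := fun j => (keydigit _ _ (hperx j)).1
  obtain ⟨T, hTpos, hnm⟩ : ∃ T : ℕ, 0 < T ∧ n = m + T := ⟨n - m, by omega, by omega⟩
  have hper : ∀ j, a (m + (T + j)) = a (m + j) := by
    intro j
    have := hpera j
    rw [hnm] at this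
    rw [show m + (T + j) = m + T + j by ring]
    exact this.symm
  have hperk : ∀ kk j, a (m + (kk*T + j)) = a (m + j) := by
    intro kk
    induction kk with
    | zero => intro j; norm_num
    | succ kk ih =>
      intro j
      rw [show (kk+1)*T + j = kk*T + (T+j) by ring, ih (T+j), hper j]
  -- affine coefficients over one period
  obtain ⟨A, hA0, hAs⟩ : ∃ A : ℕ → ℚ, A 0 = 1 ∧ ∀ t, A (t+1) = (c (m+t) : ℚ) * A t / p :=
    ⟨fun t => Nat.rec 1 (fun t At => (c (m+t) : ℚ) * At / p) t, rfl, fun _ => rfl⟩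
  obtain ⟨B, hB0, hBs⟩ : ∃ B : ℕ → ℚ, B 0 = 0 ∧
      ∀ t, B (t+1) = ((c (m+t) : ℚ) * B t + (a (m+t) : ℚ)) / p :=
    ⟨fun t => Nat.rec 0 (fun t Bt => ((c (m+t) : ℚ) * Bt + (a (m+t):ℚ)) / p) t, rfl, fun _ => rfl⟩
  have haff : ∀ t s, (∀ j, a (s + j) = a (m + j)) →
      v (s + t) = ((A t : ℚ) : ℚ_[p]) * v s + ((B t : ℚ) : ℚ_[p]) := by
    intro t
    induction t with
    | zero =>
      intro s hs
      rw [hA0, hB0]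
      push_cast
      simp
    | succ t ih =>
      intro s hs
      have e1 : v (s + (t+1)) = ((c (s+t) : ℚ_[p]) * v (s+t) + ((a (s+t) : ℕ) : ℚ_[p])) / p := by
        rw [eq_div_iff (pcast_ne_zeroQ (p := p)), mul_comm, ← hstepQ (s+t)]
        rfl
      have hcst : c (s+t) = c (m+t) := by rw [hc, hc, hs t]
      have hast : a (s+t) = a (m+t) := hs t
      rw [e1, ih s hs, hcst, hast, hAs, hBs]
      push_cast
      field_simp
      ring
  have hq0 : (q:ℚ_[p]) ≠ 0 := Nat.cast_ne_zero.mpr hq.ne'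
  have hnormc : ∀ j, ‖((c j : ℕ) : ℚ_[p])‖ = 1 := by
    intro j
    rw [hc]
    by_cases h0 : a j = 0
    · simp [h0]
    · simp only [h0, if_false]
      refine le_antisymm ?_ (not_lt.mp ?_)
      · rw [show ((q:ℚ_[p])) = ((q:ℤ):ℚ_[p]) by push_cast; ring]
        exact Padic.norm_int_le_one _
      · rw [show ((q:ℚ_[p])) = ((q:ℤ):ℚ_[p]) by push_cast; ring,
          Padic.norm_intCast_lt_one_iff, Int.natCast_dvd_natCast]
        exact hp'.coprime_iff_not_dvd.mp hpq
  have hnormA : ∀ t, ‖((A t : ℚ) : ℚ_[p])‖ = (p:ℝ) ^ t := by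
    intro t
    induction t with
    | zero => rw [hA0]; simp
    | succ t ih =>
      have e1 : ((A (t+1) : ℚ) : ℚ_[p]) = ((c (m+t) : ℕ) : ℚ_[p]) * ((A t : ℚ) : ℚ_[p]) / ((p:ℕ) : ℚ_[p]) := by
        rw [hAs]
        push_cast
        ring
      rw [e1, norm_div, norm_mul, hnormc, ih, one_mul, Padic.norm_p]
      rw [div_eq_mul_inv, inv_inv, pow_succ]
  have hpT : (1:ℝ) < (p:ℝ) ^ T := by
    have h1 : (1:ℝ) < (p:ℝ) := by exact_mod_cast hp1
    calc (1:ℝ) = 1 ^ T := (one_pow T).symm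
      _ < (p:ℝ) ^ T := by
          apply pow_lt_pow_left₀ h1 (by norm_num)
          exact hTpos.ne'
  have hC1 : (1 - A T : ℚ) ≠ 0 := by
    intro h0
    have hAT : A T = 1 := by linarith [sub_eq_zero.mp h0]
    have := hnormA T
    rw [hAT] at this
    norm_num at this
    rw [← this] at hpT
    exact lt_irrefl _ hpT
  set z : ℚ := B T / (1 - A T) with hzdef
  have hz : (A T : ℚ) * z + B T = z := by
    rw [hzdef]
    field_simp
    ring
  have hzQ : ((A T : ℚ) : ℚ_[p]) * ((z:ℚ) : ℚ_[p]) + ((B T : ℚ) : ℚ_[p]) = ((z:ℚ) : ℚ_[p]) := by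
    exact_mod_cast congrArg (fun r : ℚ => ((r : ℚ) : ℚ_[p])) hz
  -- geometric expansion
  have hw : ∀ kk, v (m + kk*T) - ((z:ℚ) : ℚ_[p]) =
      ((A T : ℚ) : ℚ_[p])^kk * (v m - ((z:ℚ) : ℚ_[p])) := by
    intro kk
    induction kk with
    | zero => norm_num
    | succ kk ih =>
      have e := haff T (m + kk*T)
        (fun j => by rw [show m + kk*T + j = m + (kk*T + j) by ring]; exact hperk kk j)
      rw [show m + (kk+1)*T = m + kk*T + T by ring, e]
      calc ((A T : ℚ) : ℚ_[p]) * v (m + kk*T) + ((B T : ℚ) : ℚ_[p]) - ((z:ℚ) : ℚ_[p])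
          = ((A T : ℚ) : ℚ_[p]) * (v (m + kk*T) - ((z:ℚ) : ℚ_[p])) := by
            linear_combination hzQ
        _ = ((A T : ℚ) : ℚ_[p]) * (((A T : ℚ) : ℚ_[p])^kk * (v m - ((z:ℚ) : ℚ_[p]))) := by
            rw [ih]
        _ = ((A T : ℚ) : ℚ_[p])^(kk+1) * (v m - ((z:ℚ) : ℚ_[p])) := by ring
  have hbound : ∀ kk, ((p:ℝ)^T)^kk * ‖v m - ((z:ℚ) : ℚ_[p])‖ ≤ 1 + ‖((z:ℚ) : ℚ_[p])‖ := by
    intro kk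
    have hn := congrArg norm (hw kk)
    rw [norm_mul, norm_pow, hnormA T] at hn
    calc ((p:ℝ)^T)^kk * ‖v m - ((z:ℚ) : ℚ_[p])‖ = ‖v (m + kk*T) - ((z:ℚ) : ℚ_[p])‖ := hn.symm
      _ ≤ ‖v (m + kk*T)‖ + ‖((z:ℚ) : ℚ_[p])‖ := norm_sub_le _ _
      _ ≤ 1 + ‖((z:ℚ) : ℚ_[p])‖ := by linarith [hvnorm (m + kk*T)]
  have hfix : v m = ((z:ℚ) : ℚ_[p]) := by
    by_contra hne
    have hpos : 0 < ‖v m - ((z:ℚ) : ℚ_[p])‖ := by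
      rw [norm_pos_iff]
      exact sub_ne_zero.mpr hne
    obtain ⟨kk, hkk⟩ := pow_unbounded_of_one_lt
      ((1 + ‖((z:ℚ) : ℚ_[p])‖) / ‖v m - ((z:ℚ) : ℚ_[p])‖) hpT
    rw [div_lt_iff₀ hpos] at hkk
    have := hbound kk
    nlinarith
  -- propagate rationality backwards along the orbit
  have hback : ∀ t, ∃ r : ℚ, v (m - t) = ((r:ℚ) : ℚ_[p]) := by
    intro t
    induction t with
    | zero => exact ⟨z, by simpa using hfix⟩
    | succ t ih =>
      obtain ⟨r, hr⟩ := ih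
      by_cases hlt : t < m
      · have eidx : m - t = (m - (t+1)) + 1 := by omega
        rw [eidx] at hr
        have hcne : ((c (m-(t+1)) : ℕ) : ℚ_[p]) ≠ 0 := by
          rw [hc]
          by_cases h0 : a (m-(t+1)) = 0 <;> simp [h0, hq0]
        have hcneQ : ((c (m-(t+1)) : ℕ) : ℚ) ≠ 0 := by
          rw [hc]
          by_cases h0 : a (m-(t+1)) = 0 <;> simp [h0, hq.ne']
        refine ⟨((p:ℚ) * r - ((a (m - (t+1)) : ℕ) : ℚ)) / ((c (m - (t+1)) : ℕ) : ℚ), ?_⟩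
        have hs := hstepQ (m - (t+1))
        rw [hr] at hs
        push_cast
        rw [eq_div_iff (by exact_mod_cast hcne)]
        push_cast at hs
        linear_combination -hs
      · have eidx : m - (t+1) = m - t := by omega
        exact ⟨r, by rw [eidx]; exact hr⟩
  obtain ⟨r, hrf⟩ := hback m
  rw [Nat.sub_self, hv 0] at hrf
  simp only [Function.iterate_zero, id_eq] at hrf
  exact ⟨r, hrf.symm⟩
end

section
/- The map φ_{p,q} is a bijective isometry of ℤ_p: it is a bijection of ℤ_p onto itself and for all u, v ∈ ℤ_p, |φ_{p,q}(u) − φ_{p,q}(v)|_p = |u − v|_p. -/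
open scoped Classical

section aux
variable {p : ℕ} [hp : Fact p.Prime]

instance : NeZero p := ⟨hp.out.ne_zero⟩

lemma my_dvd_iff_toZMod_eq (u v : ℤ_[p]) :
    (p : ℤ_[p]) ∣ u - v ↔ PadicInt.toZMod u = PadicInt.toZMod v := by
  rw [← sub_eq_zero, ← map_sub, ← RingHom.mem_ker, PadicInt.ker_toZMod,
    PadicInt.maximalIdeal_eq_span_p, Ideal.mem_span_singleton]

lemma my_eps0_eq_iff (u v : ℤ_[p]) :
    eps0 u = eps0 v ↔ PadicInt.toZMod u = PadicInt.toZMod v := by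
  unfold eps0
  exact ⟨fun h => ZMod.val_injective p h, fun h => by rw [h]⟩

lemma my_dvd_sub_eps0 (u : ℤ_[p]) : (p : ℤ_[p]) ∣ u - (eps0 u : ℤ_[p]) := by
  rw [my_dvd_iff_toZMod_eq]
  unfold eps0
  rw [map_natCast, ZMod.natCast_val, ZMod.cast_id]

end aux

section aux2
variable {p : ℕ} [hp : Fact p.Prime] {q : ℕ}

lemma my_not_p_dvd_q (hpq : Nat.Coprime p q) : ¬ p ∣ q :=
  (Nat.Prime.coprime_iff_not_dvd hp.out).mp hpq

lemma my_isUnit_q (hpq : Nat.Coprime p q) : IsUnit (q : ℤ_[p]) := by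
  rw [PadicInt.isUnit_iff]
  refine le_antisymm (PadicInt.norm_le_one _) (not_lt.mp ?_)
  have : ((q : ℤ) : ℤ_[p]) = (q : ℤ_[p]) := by push_cast; ring
  rw [← this, PadicInt.norm_int_lt_one_iff_dvd]
  exact_mod_cast fun h => my_not_p_dvd_q hpq (Int.ofNat_dvd.mp h)

lemma my_eps0_congr {u v : ℤ_[p]} (h : (p : ℤ_[p]) ∣ u - v) :
    eps0 (-((q : ℤ_[p]) * u)) = eps0 (-((q : ℤ_[p]) * v)) := by
  rw [my_eps0_eq_iff, map_neg, map_neg, map_mul, map_mul,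
    (my_dvd_iff_toZMod_eq u v).mp h]

lemma my_eps0_inj (hpq : Nat.Coprime p q) {u v : ℤ_[p]}
    (h : eps0 (-((q : ℤ_[p]) * u)) = eps0 (-((q : ℤ_[p]) * v))) :
    (p : ℤ_[p]) ∣ u - v := by
  rw [my_eps0_eq_iff, map_neg, map_neg, map_mul, map_mul] at h
  have hq0 : (PadicInt.toZMod ((q : ℤ_[p])) : ZMod p) ≠ 0 := by
    rw [map_natCast, Ne, ZMod.natCast_eq_zero_iff]
    exact my_not_p_dvd_q hpq
  rw [my_dvd_iff_toZMod_eq]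
  exact mul_left_cancel₀ hq0 (neg_injective h)
end aux2

section rec
variable {p : ℕ} [hp : Fact p.Prime] (q : ℕ) (g : ℤ_[p] → ℤ_[p])

lemma my_summable (u : ℤ_[p]) :
    Summable (fun n : ℕ => (eps0 (-((q : ℤ_[p]) * g^[n] u)) : ℤ_[p]) * (p : ℤ_[p]) ^ n) := by
  apply Summable.of_norm_bounded (g := fun n : ℕ => ((p : ℝ)⁻¹) ^ n)
  · exact summable_geometric_of_lt_one (by positivity)
      (inv_lt_one_of_one_lt₀ (by exact_mod_cast hp.out.one_lt))
  · intro n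
    rw [norm_mul]
    calc _ ≤ 1 * ‖(p : ℤ_[p]) ^ n‖ := by
          gcongr; exact PadicInt.norm_le_one _
      _ = ((p : ℝ)⁻¹) ^ n := by
          rw [one_mul, PadicInt.norm_p_pow]
          rw [zpow_neg, zpow_natCast, inv_pow]

lemma my_phi_rec (u : ℤ_[p]) :
    phi p q g u = (eps0 (-((q : ℤ_[p]) * u)) : ℤ_[p]) + (p : ℤ_[p]) * phi p q g (g u) := by
  unfold phi
  rw [Summable.tsum_eq_zero_add (my_summable q g u)]
  congr 1
  · simp
  · rw [← (my_summable q g (g u)).tsum_mul_left (p : ℤ_[p])]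
    apply tsum_congr
    intro n
    rw [Function.iterate_succ_apply, pow_succ]
    ring
end rec

section key
variable {p q : ℕ} [hp : Fact p.Prime]

lemma my_p_ne_zero : ((p : ℤ_[p]) : ℤ_[p]) ≠ 0 :=
  Nat.cast_ne_zero.mpr hp.out.ne_zero

lemma my_nat_eq_of {a b : ℕ} (ha : a < p) (hb : b < p)
    (h : (p : ℤ_[p]) ∣ (a : ℤ_[p]) - (b : ℤ_[p])) : a = b := by
  rw [my_dvd_iff_toZMod_eq, map_natCast, map_natCast] at h
  calc a = ((a : ZMod p)).val := (ZMod.val_cast_of_lt ha).symm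
    _ = ((b : ZMod p)).val := by rw [h]
    _ = b := ZMod.val_cast_of_lt hb

variable (g : ℤ_[p] → ℤ_[p])

lemma my_step_forward (hg : ∀ u : ℤ_[p], (p : ℤ_[p]) * g u =
      if (p : ℤ_[p]) ∣ u then u
      else (q : ℤ_[p]) * u + (eps0 (-((q : ℤ_[p]) * u)) : ℤ_[p])) {k : ℕ} {u v : ℤ_[p]} (h : (p : ℤ_[p]) ^ (k + 1) ∣ u - v) :
    (p : ℤ_[p]) ^ k ∣ g u - g v := by
  have h1 : (p : ℤ_[p]) ∣ u - v :=
    dvd_trans (dvd_pow_self _ (Nat.succ_ne_zero k)) h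
  have heps := my_eps0_congr (q := q) h1
  rw [← mul_dvd_mul_iff_left (my_p_ne_zero (p := p)), ← pow_succ', mul_sub]
  rw [hg u, hg v]
  by_cases hu : (p : ℤ_[p]) ∣ u
  · have hv : (p : ℤ_[p]) ∣ v := by
      have := dvd_sub hu h1; simpa using this
    rw [if_pos hu, if_pos hv]; exact h
  · have hv : ¬ (p : ℤ_[p]) ∣ v := fun hv => hu (by
      have := dvd_add hv h1; simpa using this)
    rw [if_neg hu, if_neg hv, heps]
    have : (q : ℤ_[p]) * u + (eps0 (-((q : ℤ_[p]) * v)) : ℤ_[p]) -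
        ((q : ℤ_[p]) * v + (eps0 (-((q : ℤ_[p]) * v)) : ℤ_[p])) = (q : ℤ_[p]) * (u - v) := by
      ring
    rw [this]
    exact Dvd.dvd.mul_left h _

lemma my_step_backward (hpq : Nat.Coprime p q)
    (hg : ∀ u : ℤ_[p], (p : ℤ_[p]) * g u =
      if (p : ℤ_[p]) ∣ u then u
      else (q : ℤ_[p]) * u + (eps0 (-((q : ℤ_[p]) * u)) : ℤ_[p])) {k : ℕ} {u v : ℤ_[p]} (h1 : (p : ℤ_[p]) ∣ u - v)
    (h : (p : ℤ_[p]) ^ k ∣ g u - g v) : (p : ℤ_[p]) ^ (k + 1) ∣ u - v := by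
  have heps := my_eps0_congr (q := q) h1
  have hmul : (p : ℤ_[p]) ^ (k + 1) ∣ (p : ℤ_[p]) * (g u - g v) := by
    rw [pow_succ']; exact mul_dvd_mul_left _ h
  rw [mul_sub, hg u, hg v] at hmul
  by_cases hu : (p : ℤ_[p]) ∣ u
  · have hv : (p : ℤ_[p]) ∣ v := by
      have := dvd_sub hu h1; simpa using this
    rwa [if_pos hu, if_pos hv] at hmul
  · have hv : ¬ (p : ℤ_[p]) ∣ v := fun hv => hu (by
      have := dvd_add hv h1; simpa using this)
    rw [if_neg hu, if_neg hv, heps] at hmul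
    have heq : (q : ℤ_[p]) * u + (eps0 (-((q : ℤ_[p]) * v)) : ℤ_[p]) -
        ((q : ℤ_[p]) * v + (eps0 (-((q : ℤ_[p]) * v)) : ℤ_[p])) = (q : ℤ_[p]) * (u - v) := by
      ring
    rw [heq] at hmul
    exact (IsUnit.dvd_mul_left (my_isUnit_q hpq)).mp hmul

lemma my_key (hpq : Nat.Coprime p q)
    (hg : ∀ u : ℤ_[p], (p : ℤ_[p]) * g u =
      if (p : ℤ_[p]) ∣ u then u
      else (q : ℤ_[p]) * u + (eps0 (-((q : ℤ_[p]) * u)) : ℤ_[p])) : ∀ k : ℕ, ∀ u v : ℤ_[p],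
    (p : ℤ_[p]) ^ k ∣ u - v ↔ (p : ℤ_[p]) ^ k ∣ phi p q g u - phi p q g v := by
  intro k
  induction k with
  | zero => intro u v; simp
  | succ k ih =>
    intro u v
    have hrec : phi p q g u - phi p q g v =
        ((eps0 (-((q : ℤ_[p]) * u)) : ℤ_[p]) - (eps0 (-((q : ℤ_[p]) * v)) : ℤ_[p])) +
          (p : ℤ_[p]) * (phi p q g (g u) - phi p q g (g v)) := by
      rw [my_phi_rec q g u, my_phi_rec q g v]; ring
    constructor
    · intro h
      have h1 : (p : ℤ_[p]) ∣ u - v :=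
        dvd_trans (dvd_pow_self _ (Nat.succ_ne_zero k)) h
      have heps := my_eps0_congr (q := q) h1
      have h2 : (p : ℤ_[p]) ^ k ∣ phi p q g (g u) - phi p q g (g v) :=
        (ih _ _).mp (my_step_forward g hg h)
      rw [hrec, heps, sub_self, zero_add, pow_succ']
      exact mul_dvd_mul_left _ h2
    · intro h
      have hp1 : (p : ℤ_[p]) ∣ phi p q g u - phi p q g v :=
        dvd_trans (dvd_pow_self _ (Nat.succ_ne_zero k)) h
      have heps : eps0 (-((q : ℤ_[p]) * u)) = eps0 (-((q : ℤ_[p]) * v)) := by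
        apply my_nat_eq_of (ZMod.val_lt _) (ZMod.val_lt _)
        have : (p : ℤ_[p]) ∣ ((eps0 (-((q : ℤ_[p]) * u)) : ℤ_[p]) -
            (eps0 (-((q : ℤ_[p]) * v)) : ℤ_[p])) := by
          have hsub := dvd_sub hp1 (Dvd.intro _ rfl :
            (p : ℤ_[p]) ∣ (p : ℤ_[p]) * (phi p q g (g u) - phi p q g (g v)))
          rw [hrec] at hsub
          simpa using hsub
        exact this
      have h1 : (p : ℤ_[p]) ∣ u - v := my_eps0_inj hpq heps
      have h2 : (p : ℤ_[p]) ^ k ∣ phi p q g (g u) - phi p q g (g v) := by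
        rw [← mul_dvd_mul_iff_left (my_p_ne_zero (p := p)), ← pow_succ']
        rw [hrec, heps, sub_self, zero_add] at h
        exact h
      exact my_step_backward g hpq hg h1 ((ih _ _).mpr h2)
end key

section norm
variable {p : ℕ} [hp : Fact p.Prime]

lemma my_dvd_iff_norm_le (x : ℤ_[p]) (k : ℕ) :
    (p : ℤ_[p]) ^ k ∣ x ↔ ‖x‖ ≤ (p : ℝ) ^ (-k : ℤ) := by
  rw [PadicInt.norm_le_pow_iff_mem_span_pow, Ideal.mem_span_singleton]

lemma my_eq_zero_of (x : ℤ_[p]) (h : ∀ k : ℕ, (p : ℤ_[p]) ^ k ∣ x) : x = 0 := by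
  have hp1 : (1 : ℝ) < p := by exact_mod_cast hp.out.one_lt
  have htend : Filter.Tendsto (fun k : ℕ => ((p : ℝ)⁻¹) ^ k) Filter.atTop (nhds 0) :=
    tendsto_pow_atTop_nhds_zero_of_lt_one (by positivity) (inv_lt_one_of_one_lt₀ hp1)
  have hle : ‖x‖ ≤ 0 := by
    refine ge_of_tendsto' htend fun k => ?_
    have := (my_dvd_iff_norm_le x k).mp (h k)
    rwa [zpow_neg, zpow_natCast, ← inv_pow] at this
  exact norm_le_zero_iff.mp hle

lemma my_norm_eq_of_dvd_iff (x y : ℤ_[p])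
    (h : ∀ k : ℕ, ((p : ℤ_[p]) ^ k ∣ x ↔ (p : ℤ_[p]) ^ k ∣ y)) : ‖x‖ = ‖y‖ := by
  by_cases hx : x = 0
  · have hy : y = 0 := my_eq_zero_of y (fun k => (h k).mp (hx ▸ dvd_zero _))
    rw [hx, hy]
  · have hy : y ≠ 0 := fun hy =>
      hx (my_eq_zero_of x (fun k => (h k).mpr (hy ▸ dvd_zero _)))
    have hval : x.valuation = y.valuation := by
      have hxy : x.valuation ≤ y.valuation := by
        rw [← PadicInt.norm_le_pow_iff_le_valuation y hy, ← my_dvd_iff_norm_le]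
        refine (h _).mp ?_
        rw [my_dvd_iff_norm_le, PadicInt.norm_le_pow_iff_le_valuation x hx]
      have hyx : y.valuation ≤ x.valuation := by
        rw [← PadicInt.norm_le_pow_iff_le_valuation x hx, ← my_dvd_iff_norm_le]
        refine (h _).mpr ?_
        rw [my_dvd_iff_norm_le, PadicInt.norm_le_pow_iff_le_valuation y hy]
      exact le_antisymm hxy hyx
    rw [PadicInt.norm_eq_zpow_neg_valuation hx, PadicInt.norm_eq_zpow_neg_valuation hy, hval]
end norm

lemma my_surj_of_isometry {X : Type*} [MetricSpace X] [CompactSpace X] (f : X → X)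
    (hf : Isometry f) : Function.Surjective f := by
  intro t
  have hclosed : IsClosed (Set.range f) := (isCompact_range hf.continuous).isClosed
  have hmem : t ∈ closure (Set.range f) := by
    rw [Metric.mem_closure_iff]
    intro ε hε
    obtain ⟨x, -, ψ, hψ, hconv⟩ :=
      IsCompact.tendsto_subseq isCompact_univ (fun n : ℕ => Set.mem_univ (f^[n] t))
    rw [Metric.tendsto_atTop] at hconv
    obtain ⟨N, hN⟩ := hconv (ε / 2) (by positivity)
    have hiso : ∀ j : ℕ, Isometry (f^[j]) := by
      intro j
      induction j with
      | zero => simpa using isometry_id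
      | succ j ih => rw [Function.iterate_succ']; exact hf.comp ih
    have hmn : ψ N < ψ (N + 1) := hψ (Nat.lt_succ_self N)
    set d : ℕ := ψ (N + 1) - ψ N with hd
    have hd1 : 1 ≤ d := by omega
    have hkey : dist t (f^[d] t) < ε := by
      have h1 : dist (f^[ψ N] t) (f^[ψ (N + 1)] t) < ε := by
        calc dist (f^[ψ N] t) (f^[ψ (N + 1)] t)
            ≤ dist (f^[ψ N] t) x + dist x (f^[ψ (N + 1)] t) := dist_triangle _ _ _
          _ < ε / 2 + ε / 2 := by
              refine add_lt_add ?_ ?_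
              · exact hN N le_rfl
              · rw [dist_comm]; exact hN (N + 1) (Nat.le_succ N)
          _ = ε := by ring
      have h2 : f^[ψ (N + 1)] t = f^[ψ N] (f^[d] t) := by
        rw [← Function.iterate_add_apply]
        congr 1
        omega
      rw [h2] at h1
      rwa [Isometry.dist_eq (hiso (ψ N))] at h1
    refine ⟨f^[d] t, ⟨f^[d - 1] t, ?_⟩, hkey⟩
    rw [← Function.iterate_succ_apply' f (d - 1) t]
    congr 1
    omega
  rwa [hclosed.closure_eq] at hmem

/-- `φ_{p,q}` is a bijective isometry of `ℤ_p`. -/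
theorem stmt4 (p q : ℕ) [Fact p.Prime] (hq : 0 < q) (hpq : Nat.Coprime p q)
    (g : ℤ_[p] → ℤ_[p])
    (hg : ∀ u : ℤ_[p], (p : ℤ_[p]) * g u =
      if (p : ℤ_[p]) ∣ u then u
      else (q : ℤ_[p]) * u + (eps0 (-((q : ℤ_[p]) * u)) : ℤ_[p])) :
    Function.Bijective (phi p q g) ∧
      ∀ u v : ℤ_[p], ‖phi p q g u - phi p q g v‖ = ‖u - v‖ := by

  have hnorm : ∀ u v : ℤ_[p], ‖phi p q g u - phi p q g v‖ = ‖u - v‖ := fun u v =>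
    my_norm_eq_of_dvd_iff _ _ (fun k => (my_key g hpq hg k u v).symm)
  have hiso : Isometry (phi p q g) := Isometry.of_dist_eq fun a b => by
    rw [dist_eq_norm, dist_eq_norm, hnorm]
  exact ⟨⟨hiso.injective, my_surj_of_isometry _ hiso⟩, hnorm⟩
end

section
/- φ_{p,q} ∘ g_{p,q} = δ_p ∘ φ_{p,q}, i.e. for every u ∈ ℤ_p, φ_{p,q}(g_{p,q}(u)) = δ_p(φ_{p,q}(u)). -/
open scoped Classical

lemma summable_aux {p : ℕ} [Fact p.Prime] (c : ℕ → ℤ_[p]) :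
    Summable (fun n => c n * (p : ℤ_[p]) ^ n) := by
  have hp1 : 1 < (p : ℝ) := by exact_mod_cast (Fact.out (p := p.Prime)).one_lt
  apply Summable.of_norm_bounded (g := fun n => ((p : ℝ)⁻¹) ^ n)
  · exact summable_geometric_of_lt_one (by positivity)
      (inv_lt_one_of_one_lt₀ hp1)
  · intro n
    calc ‖c n * (p : ℤ_[p]) ^ n‖ ≤ ‖(p : ℤ_[p]) ^ n‖ := by
          rw [norm_mul]
          exact mul_le_of_le_one_left (norm_nonneg _) (c n).norm_le_one
    _ = ((p : ℝ)⁻¹) ^ n := by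
          rw [PadicInt.norm_p_pow, inv_pow, ← zpow_natCast, ← zpow_neg]

/-- `φ_{p,q} ∘ g_{p,q} = δ_p ∘ φ_{p,q}`, where `δ_p(v) = (v - ε₀(v))/p`. -/
theorem stmt5 (p q : ℕ) [Fact p.Prime] (hq : 0 < q) (hpq : Nat.Coprime p q)
    (g : ℤ_[p] → ℤ_[p])
    (hg : ∀ u : ℤ_[p], (p : ℤ_[p]) * g u =
      if (p : ℤ_[p]) ∣ u then u
      else (q : ℤ_[p]) * u + (eps0 (-((q : ℤ_[p]) * u)) : ℤ_[p]))
    (δ : ℤ_[p] → ℤ_[p])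
    (hδ : ∀ v : ℤ_[p], (p : ℤ_[p]) * δ v = v - (eps0 v : ℤ_[p]))
    (u : ℤ_[p]) :
    phi p q g (g u) = δ (phi p q g u) := by
  haveI : NeZero p := ⟨(Fact.out (p := p.Prime)).ne_zero⟩
  have hp0 : (p : ℤ_[p]) ≠ 0 := Nat.cast_ne_zero.mpr (Fact.out (p := p.Prime)).ne_zero
  set c : ℕ → ℤ_[p] := fun n => ((eps0 (-((q : ℤ_[p]) * g^[n] u)) : ℕ) : ℤ_[p]) with hc
  have hsum : Summable (fun n => c n * (p : ℤ_[p]) ^ n) := summable_aux c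
  have hphi : phi p q g u = ∑' n, c n * (p : ℤ_[p]) ^ n := rfl
  -- the series for φ(g u) is the shifted series
  have hshift : phi p q g (g u) = ∑' n, c (n + 1) * (p : ℤ_[p]) ^ n := rfl
  have h1 : (p : ℤ_[p]) * phi p q g (g u) = ∑' n, c (n + 1) * (p : ℤ_[p]) ^ (n + 1) := by
    rw [hshift, ← Summable.tsum_mul_left (p : ℤ_[p]) (summable_aux (fun n => c (n + 1)))]
    exact tsum_congr fun n => by ring
  have h2 : phi p q g u = c 0 + ∑' n, c (n + 1) * (p : ℤ_[p]) ^ (n + 1) := by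
    rw [hphi, Summable.tsum_eq_zero_add hsum, pow_zero, mul_one]
  have hkey : (p : ℤ_[p]) * phi p q g (g u) = phi p q g u - c 0 := by
    rw [h1, h2]; ring
  -- ε₀(φ u) = ε₀(-q u)
  have heps : (eps0 (phi p q g u) : ℤ_[p]) = c 0 := by
    have hdvd : phi p q g u - c 0 = (p : ℤ_[p]) * phi p q g (g u) := hkey.symm
    have hmap : PadicInt.toZMod (phi p q g u)
        = ((eps0 (-((q : ℤ_[p]) * g^[0] u)) : ℕ) : ZMod p) := by
      have h := congrArg PadicInt.toZMod hkey
      rw [map_mul, map_sub, map_natCast, map_natCast, ZMod.natCast_self, zero_mul] at h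
      exact (sub_eq_zero.mp h.symm)
    have hval : eps0 (phi p q g u) = eps0 (-((q : ℤ_[p]) * g^[0] u)) := by
      unfold eps0
      rw [hmap]
      exact ZMod.val_natCast_of_lt (ZMod.val_lt _)
    rw [hval, hc]
  -- cancel p
  apply mul_left_cancel₀ hp0
  rw [hδ, heps, hkey]
end

section
/- For every u ∈ ℤ_p, the series Σ_{i=0}^∞ ε₀(−q·u_i)·p^i·q^{−r_i(u)} converges in ℚ_p and u + Σ_{i=0}^∞ ε₀(−q·u_i)·p^i·q^{−r_i(u)} = 0 in ℚ_p. -/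
open scoped Classical

open scoped Classical in
/-- `r_n(u)`: the number of indices `0 ≤ i ≤ n` with `p ∤ g^i(u)`. -/
noncomputable def rcount (p : ℕ) [Fact p.Prime] (g : ℤ_[p] → ℤ_[p]) (u : ℤ_[p]) (n : ℕ) : ℕ :=
  ((Finset.range (n + 1)).filter fun i => ¬ (p : ℤ_[p]) ∣ g^[i] u).card

lemma aux_norm_nat_le_one (p : ℕ) [Fact p.Prime] (n : ℕ) : ‖(n : ℚ_[p])‖ ≤ 1 := by
  simpa using Padic.norm_int_le_one (p := p) (n : ℤ)

lemma aux_norm_q_eq_one (p : ℕ) [Fact p.Prime] (q : ℕ) (hpq : Nat.Coprime p q) :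
    ‖(q : ℚ_[p])‖ = 1 := by
  have hp := (Fact.out : p.Prime)
  refine le_antisymm (aux_norm_nat_le_one p q) ?_
  by_contra hlt
  push_neg at hlt
  have h1 : ‖((q : ℤ) : ℚ_[p])‖ < 1 := by simpa using hlt
  have : (p : ℤ) ∣ (q : ℤ) := Padic.norm_intCast_lt_one_iff.1 h1
  exact (Nat.Prime.coprime_iff_not_dvd hp).1 hpq (Int.natCast_dvd_natCast.1 this)

lemma aux_eps0_zero {p : ℕ} [Fact p.Prime] (q : ℕ) (v : ℤ_[p]) (h : (p : ℤ_[p]) ∣ v) :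
    eps0 (-((q : ℤ_[p]) * v)) = 0 := by
  obtain ⟨w, rfl⟩ := h
  have h0 : PadicInt.toZMod (-((q : ℤ_[p]) * ((p : ℤ_[p]) * w))) = 0 := by
    rw [map_neg, map_mul, map_mul, map_natCast, map_natCast, ZMod.natCast_self]
    ring
  rw [eps0, h0, ZMod.val_zero]

/-- The series `Σ ε₀(-q u_i) p^i q^{-r_i(u)}` converges in `ℚ_p` and
`u + Σ_{i=0}^∞ ε₀(-q u_i) p^i q^{-r_i(u)} = 0`. -/
theorem stmt6 (p q : ℕ) [Fact p.Prime] (hq : 0 < q) (hpq : Nat.Coprime p q)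
    (g : ℤ_[p] → ℤ_[p])
    (hg : ∀ u : ℤ_[p], (p : ℤ_[p]) * g u =
      if (p : ℤ_[p]) ∣ u then u
      else (q : ℤ_[p]) * u + (eps0 (-((q : ℤ_[p]) * u)) : ℤ_[p]))
    (u : ℤ_[p]) :
    Summable (fun i : ℕ =>
        (eps0 (-((q : ℤ_[p]) * g^[i] u)) : ℚ_[p]) * (p : ℚ_[p]) ^ i *
          ((q : ℚ_[p]) ^ rcount p g u i)⁻¹) ∧
      (u : ℚ_[p]) +
        (∑' i : ℕ,
          (eps0 (-((q : ℤ_[p]) * g^[i] u)) : ℚ_[p]) * (p : ℚ_[p]) ^ i *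
            ((q : ℚ_[p]) ^ rcount p g u i)⁻¹) = 0 := by
  have hp := (Fact.out : p.Prime)
  set f : ℕ → ℚ_[p] := fun i =>
    (eps0 (-((q : ℤ_[p]) * g^[i] u)) : ℚ_[p]) * (p : ℚ_[p]) ^ i *
      ((q : ℚ_[p]) ^ rcount p g u i)⁻¹ with hf
  have hqz : (q : ℚ_[p]) ≠ 0 := Nat.cast_ne_zero.2 hq.ne'
  have hqnorm : ‖(q : ℚ_[p])‖ = 1 := aux_norm_q_eq_one p q hpq
  have hnormf : ∀ i, ‖f i‖ ≤ ((p : ℝ)⁻¹) ^ i := by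
    intro i
    have h1 : ‖(eps0 (-((q : ℤ_[p]) * g^[i] u)) : ℚ_[p])‖ ≤ 1 :=
      aux_norm_nat_le_one p _
    have h2 : ‖((q : ℚ_[p]) ^ rcount p g u i)⁻¹‖ = 1 := by
      rw [norm_inv, norm_pow, hqnorm, one_pow, inv_one]
    have h3 : ‖f i‖ = ‖(eps0 (-((q : ℤ_[p]) * g^[i] u)) : ℚ_[p])‖ * ‖(p : ℚ_[p]) ^ i‖ *
        ‖((q : ℚ_[p]) ^ rcount p g u i)⁻¹‖ := by
      rw [hf, norm_mul, norm_mul]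
    rw [h3, h2, mul_one]
    have h4 : ‖(p : ℚ_[p]) ^ i‖ = ((p : ℝ)⁻¹) ^ i := by
      rw [norm_pow, Padic.norm_p]
    rw [h4]
    calc ‖(eps0 (-((q : ℤ_[p]) * g^[i] u)) : ℚ_[p])‖ * ((p : ℝ)⁻¹) ^ i
        ≤ 1 * ((p : ℝ)⁻¹) ^ i := by gcongr
      _ = ((p : ℝ)⁻¹) ^ i := one_mul _
  have hpinv : (p : ℝ)⁻¹ < 1 := by
    rw [inv_lt_one_iff₀]
    right
    exact_mod_cast hp.one_lt
  have hpinv0 : (0 : ℝ) ≤ (p : ℝ)⁻¹ := by positivity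
  have hsum : Summable f :=
    Summable.of_norm_bounded (summable_geometric_of_lt_one hpinv0 hpinv) hnormf
  refine ⟨hsum, ?_⟩
  set R : ℕ → ℕ := fun n => ((Finset.range n).filter fun i => ¬ (p : ℤ_[p]) ∣ g^[i] u).card
    with hRdef
  have hR : ∀ i, rcount p g u i = R (i + 1) := fun i => rfl
  have hRsucc : ∀ n, R (n + 1) = R n + (if (p : ℤ_[p]) ∣ g^[n] u then 0 else 1) := by
    intro n
    simp only [hRdef, Finset.range_add_one, Finset.filter_insert, not_not]
    split_ifs with h
    · exact (add_zero _).symm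
    · rw [Finset.card_insert_of_notMem (by simp)]
  have key : ∀ n, (u : ℚ_[p]) + ∑ i ∈ Finset.range n, f i
      = (p : ℚ_[p]) ^ n * ((g^[n] u : ℤ_[p]) : ℚ_[p]) * ((q : ℚ_[p]) ^ (R n))⁻¹ := by
    intro n
    induction n with
    | zero =>
      rw [Finset.sum_range_zero, add_zero, pow_zero, one_mul, Function.iterate_zero_apply]
      have : R 0 = 0 := rfl
      rw [this, pow_zero, inv_one, mul_one]
    | succ n ih =>
      rw [Finset.sum_range_succ, ← add_assoc, ih]
      have hgn := hg (g^[n] u)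
      by_cases h : (p : ℤ_[p]) ∣ g^[n] u
      · have heps := aux_eps0_zero q _ h
        have hR1 : R (n + 1) = R n := by rw [hRsucc n, if_pos h, add_zero]
        have hc : ((g^[n] u : ℤ_[p]) : ℚ_[p]) = (p : ℚ_[p]) * ((g (g^[n] u) : ℤ_[p]) : ℚ_[p]) := by
          rw [if_pos h] at hgn
          calc ((g^[n] u : ℤ_[p]) : ℚ_[p])
              = (((p : ℤ_[p]) * g (g^[n] u) : ℤ_[p]) : ℚ_[p]) := by rw [hgn]
            _ = _ := by rw [PadicInt.coe_mul, PadicInt.coe_natCast]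
        show _ + (eps0 (-((q : ℤ_[p]) * g^[n] u)) : ℚ_[p]) * (p : ℚ_[p]) ^ n *
            ((q : ℚ_[p]) ^ rcount p g u n)⁻¹ = _
        rw [heps, hR1, Function.iterate_succ_apply', hc, pow_succ, Nat.cast_zero, zero_mul,
          zero_mul, add_zero]
        ring
      · have hR1 : R (n + 1) = R n + 1 := by rw [hRsucc n, if_neg h]
        have hc : (p : ℚ_[p]) * ((g (g^[n] u) : ℤ_[p]) : ℚ_[p])
            = (q : ℚ_[p]) * ((g^[n] u : ℤ_[p]) : ℚ_[p])
              + (eps0 (-((q : ℤ_[p]) * g^[n] u)) : ℚ_[p]) := by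
          rw [if_neg h] at hgn
          have h6 := congrArg (fun x : ℤ_[p] => (x : ℚ_[p])) hgn
          simpa only [PadicInt.coe_mul, PadicInt.coe_add, PadicInt.coe_natCast] using h6
        show _ + (eps0 (-((q : ℤ_[p]) * g^[n] u)) : ℚ_[p]) * (p : ℚ_[p]) ^ n *
            ((q : ℚ_[p]) ^ rcount p g u n)⁻¹ = _
        rw [hR n, hR1, Function.iterate_succ_apply', pow_succ (q : ℚ_[p]), pow_succ (p : ℚ_[p])]
        have hqpow : ((q : ℚ_[p]) ^ (R n)) ≠ 0 := pow_ne_zero _ hqz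
        field_simp
        linear_combination (-((p : ℚ_[p]) ^ n)) * hc
  have hlim : Filter.Tendsto
      (fun n => (p : ℚ_[p]) ^ n * ((g^[n] u : ℤ_[p]) : ℚ_[p]) * ((q : ℚ_[p]) ^ (R n))⁻¹)
      Filter.atTop (nhds 0) := by
    apply squeeze_zero_norm (a := fun n => ((p : ℝ)⁻¹) ^ n)
    · intro n
      have h5 : ‖(p : ℚ_[p]) ^ n * ((g^[n] u : ℤ_[p]) : ℚ_[p]) * ((q : ℚ_[p]) ^ (R n))⁻¹‖
          = ((p : ℝ)⁻¹) ^ n * ‖((g^[n] u : ℤ_[p]) : ℚ_[p])‖ * 1 := by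
        rw [norm_mul, norm_mul, norm_pow, Padic.norm_p, norm_inv, norm_pow, hqnorm,
          one_pow, inv_one]
      rw [h5, mul_one]
      have hu1 : ‖((g^[n] u : ℤ_[p]) : ℚ_[p])‖ ≤ 1 := by
        rw [PadicInt.padic_norm_e_of_padicInt]
        exact PadicInt.norm_le_one _
      calc ((p : ℝ)⁻¹) ^ n * ‖((g^[n] u : ℤ_[p]) : ℚ_[p])‖ ≤ ((p : ℝ)⁻¹) ^ n * 1 := by
            gcongr
        _ = ((p : ℝ)⁻¹) ^ n := mul_one _
    · exact tendsto_pow_atTop_nhds_zero_of_lt_one hpinv0 hpinv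
  have hps : Filter.Tendsto (fun n => ∑ i ∈ Finset.range n, f i) Filter.atTop
      (nhds (∑' i, f i)) := hsum.hasSum.tendsto_sum_nat
  have hps2 : Filter.Tendsto (fun n => ∑ i ∈ Finset.range n, f i) Filter.atTop
      (nhds (-(u : ℚ_[p]))) := by
    have heq : (fun n => ∑ i ∈ Finset.range n, f i)
        = fun n => ((p : ℚ_[p]) ^ n * ((g^[n] u : ℤ_[p]) : ℚ_[p]) * ((q : ℚ_[p]) ^ (R n))⁻¹)
          - (u : ℚ_[p]) := by
      funext n
      rw [← key n]
      ring
    rw [heq]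
    have := hlim.sub_const (u : ℚ_[p])
    rwa [zero_sub] at this
  have hfin := tendsto_nhds_unique hps hps2
  rw [hfin]
  ring
end

section
/- For every u ∈ ℤ_p, the following identity of formal power series holds in ℚ_p[[T]]: u + Σ_{n=0}^∞ ε₀(−q·u_n)·p^n·q^{−r_n(u)}·T^n = (1 − T) · Σ_{n=0}^∞ p^{n+1}·u_{n+1}·q^{−r_n(u)}·T^n. -/
open scoped Classical

lemma eps0_of_dvd {p : ℕ} [Fact p.Prime] (q : ℕ) {v : ℤ_[p]} (h : (p : ℤ_[p]) ∣ v) :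
    eps0 (-((q : ℤ_[p]) * v)) = 0 := by
  have hz : PadicInt.toZMod v = 0 := by
    rw [← RingHom.mem_ker, PadicInt.ker_toZMod, PadicInt.maximalIdeal_eq_span_p,
      Ideal.mem_span_singleton]
    exact h
  simp [eps0, hz]

lemma rcount_succ {p : ℕ} [Fact p.Prime] (g : ℤ_[p] → ℤ_[p]) (u : ℤ_[p]) (n : ℕ) :
    rcount p g u (n + 1) =
      rcount p g u n + (if (p : ℤ_[p]) ∣ g^[n + 1] u then 0 else 1) := by
  unfold rcount
  rw [Finset.range_add_one, Finset.filter_insert]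
  by_cases h : (p : ℤ_[p]) ∣ g^[n + 1] u
  · rw [if_neg (not_not.mpr h), if_pos h, add_zero]
  · rw [if_pos h, if_neg h, Finset.card_insert_of_notMem (by simp)]

/-- The identity of formal power series in `ℚ_p[[T]]`:
`u + Σ ε₀(-q u_n) p^n q^{-r_n(u)} T^n = (1 - T) · Σ p^{n+1} u_{n+1} q^{-r_n(u)} T^n`. -/
theorem stmt7 (p q : ℕ) [Fact p.Prime] (hq : 0 < q) (hpq : Nat.Coprime p q)
    (g : ℤ_[p] → ℤ_[p])
    (hg : ∀ u : ℤ_[p], (p : ℤ_[p]) * g u =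
      if (p : ℤ_[p]) ∣ u then u
      else (q : ℤ_[p]) * u + (eps0 (-((q : ℤ_[p]) * u)) : ℤ_[p]))
    (u : ℤ_[p]) :
    (PowerSeries.C (u : ℚ_[p]) +
        PowerSeries.mk (fun n : ℕ =>
          (eps0 (-((q : ℤ_[p]) * g^[n] u)) : ℚ_[p]) * (p : ℚ_[p]) ^ n *
            ((q : ℚ_[p]) ^ rcount p g u n)⁻¹)) =
      (1 - PowerSeries.X) *
        PowerSeries.mk (fun n : ℕ =>
          (p : ℚ_[p]) ^ (n + 1) * ((g^[n + 1] u : ℤ_[p]) : ℚ_[p]) *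
            ((q : ℚ_[p]) ^ rcount p g u n)⁻¹) := by
  have hp0 : (p : ℚ_[p]) ≠ 0 := Nat.cast_ne_zero.mpr (Fact.out : p.Prime).pos.ne'
  have hq0 : (q : ℚ_[p]) ≠ 0 := Nat.cast_ne_zero.mpr hq.ne'
  -- cast of hg
  have key : ∀ n : ℕ, (p : ℚ_[p]) * ((g^[n + 1] u : ℤ_[p]) : ℚ_[p]) =
      if (p : ℤ_[p]) ∣ g^[n] u then ((g^[n] u : ℤ_[p]) : ℚ_[p])
      else (q : ℚ_[p]) * ((g^[n] u : ℤ_[p]) : ℚ_[p]) +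
        (eps0 (-((q : ℤ_[p]) * g^[n] u)) : ℚ_[p]) := by
    intro n
    have := hg (g^[n] u)
    rw [Function.iterate_succ_apply']
    split_ifs with h
    · rw [if_pos h] at this
      exact_mod_cast congrArg (fun x : ℤ_[p] => (x : ℚ_[p])) this
    · rw [if_neg h] at this
      exact_mod_cast congrArg (fun x : ℤ_[p] => (x : ℚ_[p])) this
  ext n
  rw [sub_mul, one_mul, map_add, map_sub, PowerSeries.coeff_mk]
  cases n with
  | zero =>
    rw [PowerSeries.coeff_zero_X_mul, PowerSeries.coeff_C, if_pos rfl, PowerSeries.coeff_mk,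
      sub_zero]
    have hr : rcount p g u 0 = if (p : ℤ_[p]) ∣ u then 0 else 1 := by
      unfold rcount
      split_ifs with h <;> simp [Finset.filter_singleton, h, Finset.range_one]
    have := key 0
    simp only [Function.iterate_zero_apply] at this hr ⊢
    simp only [Function.iterate_succ_apply', Function.iterate_zero_apply] at this
    split_ifs at this hr with h
    · rw [eps0_of_dvd q h, hr]
      simp only [pow_zero, pow_one, inv_one, mul_one, Nat.cast_zero, zero_mul, add_zero,
        Function.iterate_one]
      simp only [h, ↓reduceIte] at this
      rw [← this]
      simp
    · simp only [h, ↓reduceIte] at this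
      rw [hr, Function.iterate_one, pow_one]
      field_simp
      linear_combination -this
  | succ m =>
    rw [PowerSeries.coeff_succ_X_mul, PowerSeries.coeff_C, if_neg (Nat.succ_ne_zero m),
      PowerSeries.coeff_mk, PowerSeries.coeff_mk, zero_add]
    have hr := rcount_succ g u m
    have hk := key (m + 1)
    rw [Function.iterate_succ_apply'] at hk
    set v := g^[m + 1] u with hv
    split_ifs at hk hr with h
    · rw [eps0_of_dvd q h, hr, add_zero]
      push_cast
      rw [zero_mul, zero_mul]
      have : (p : ℚ_[p]) ^ (m + 1 + 1) * ((g (v) : ℤ_[p]) : ℚ_[p]) =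
          (p : ℚ_[p]) ^ (m + 1) * ((v : ℤ_[p]) : ℚ_[p]) := by
        rw [pow_succ, mul_assoc, hk]
      rw [show g^[m + 1 + 1] u = g v by rw [Function.iterate_succ_apply', hv], this]
      ring
    · rw [hr]
      rw [show g^[m + 1 + 1] u = g v by rw [Function.iterate_succ_apply', hv]]
      have e : ((q : ℚ_[p]))⁻¹ * (q : ℚ_[p]) = 1 := inv_mul_cancel₀ hq0
      rw [show ((q : ℚ_[p]) ^ (rcount p g u m + 1))⁻¹ =
          ((q : ℚ_[p]) ^ rcount p g u m)⁻¹ * ((q : ℚ_[p]))⁻¹ from by rw [pow_succ, mul_inv]]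
      linear_combination (-(p : ℚ_[p]) ^ (m + 1) * (((q : ℚ_[p]) ^ rcount p g u m)⁻¹) *
          ((q : ℚ_[p]))⁻¹) * hk -
        ((p : ℚ_[p]) ^ (m + 1) * ((v : ℤ_[p]) : ℚ_[p]) *
          (((q : ℚ_[p]) ^ rcount p g u m)⁻¹)) * e
end

section
/- For every integer k ≥ 1, the set {u ∈ ℤ_p : g_{p,q}^k(u) = u} of k-periodic points of g_{p,q} has exactly p^k elements. -/
open scoped Classical

/-- For every `k ≥ 1`, the set of `k`-periodic points of `g_{p,q}` in `ℤ_p`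
has exactly `p^k` elements. -/
theorem stmt9 (p q : ℕ) [Fact p.Prime] (hq : 0 < q) (hpq : Nat.Coprime p q)
    (g : ℤ_[p] → ℤ_[p])
    (hg : ∀ u : ℤ_[p], (p : ℤ_[p]) * g u =
      if (p : ℤ_[p]) ∣ u then u
      else (q : ℤ_[p]) * u + (eps0 (-((q : ℤ_[p]) * u)) : ℤ_[p]))
    (k : ℕ) (hk : 1 ≤ k) :
    {u : ℤ_[p] | g^[k] u = u}.ncard = p ^ k := by
  haveI : NeZero p := ⟨(Fact.out : p.Prime).ne_zero⟩
  have hp2 : 1 < p := (Fact.out : p.Prime).one_lt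
  have hp0 : (p : ℤ_[p]) ≠ 0 := Nat.cast_ne_zero.mpr (Fact.out : p.Prime).ne_zero
  -- `q` is a unit in `ℤ_[p]`
  have hqnorm : ‖(q : ℤ_[p])‖ = 1 := by
    have hnd : ¬ ((p : ℤ) ∣ (q : ℤ)) := by
      exact_mod_cast ((Fact.out : p.Prime).coprime_iff_not_dvd).mp hpq
    refine le_antisymm (PadicInt.norm_le_one _) ?_
    have := (PadicInt.norm_int_lt_one_iff_dvd (p := p) (q : ℤ)).not.mpr hnd
    push_cast at this
    linarith [not_lt.mp this]
  have hqu : IsUnit (q : ℤ_[p]) := PadicInt.isUnit_iff.mpr hqnorm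
  set qu : ℤ_[p]ˣ := hqu.unit with hqu_def
  have hqu_spec : (qu : ℤ_[p]) = (q : ℤ_[p]) := hqu.unit_spec
  set invq : ℤ_[p] := ((qu⁻¹ : ℤ_[p]ˣ) : ℤ_[p]) with hinvq_def
  have hinv : (q : ℤ_[p]) * invq = 1 := by
    rw [← hqu_spec]; exact_mod_cast qu.mul_inv
  have hinv' : invq * (q : ℤ_[p]) = 1 := by rw [mul_comm]; exact hinv
  -- divisibility by p vs toZMod
  have hdvd_iff : ∀ z : ℤ_[p], PadicInt.toZMod z = 0 ↔ (p : ℤ_[p]) ∣ z := by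
    intro z
    rw [← RingHom.mem_ker, PadicInt.ker_toZMod, PadicInt.maximalIdeal_eq_span_p,
      Ideal.mem_span_singleton]
  -- the key backward step: g contracts differences (backwards)
  have hkey : ∀ a b : ℤ_[p], PadicInt.toZMod a = PadicInt.toZMod b →
      ‖a - b‖ ≤ (p : ℝ)⁻¹ * ‖g a - g b‖ := by
    intro a b hab
    by_cases hpa : (p : ℤ_[p]) ∣ a
    · have hpb : (p : ℤ_[p]) ∣ b := by
        rw [← hdvd_iff] at hpa ⊢; rw [← hab]; exact hpa
      have ha := hg a; have hb := hg b
      rw [if_pos hpa] at ha; rw [if_pos hpb] at hb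
      have : a - b = (p : ℤ_[p]) * (g a - g b) := by rw [mul_sub, ha, hb]
      rw [this, norm_mul, PadicInt.norm_p]
    · have hpb : ¬ (p : ℤ_[p]) ∣ b := by
        rw [← hdvd_iff] at hpa ⊢; rw [← hab]; exact hpa
      have heps : eps0 (-((q : ℤ_[p]) * a)) = eps0 (-((q : ℤ_[p]) * b)) := by
        unfold eps0
        congr 1
        rw [map_neg, map_neg, map_mul, map_mul, hab]
      have ha := hg a; have hb := hg b
      rw [if_neg hpa] at ha; rw [if_neg hpb] at hb
      have hsub : (p : ℤ_[p]) * (g a - g b) = (q : ℤ_[p]) * (a - b) := by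
        rw [mul_sub, ha, hb, heps]; ring
      have : ‖a - b‖ = ‖(q : ℤ_[p]) * (a - b)‖ := by
        rw [norm_mul, hqnorm, one_mul]
      rw [this, ← hsub, norm_mul, PadicInt.norm_p]
  -- the inverse branches G r
  set G : ZMod p → ℤ_[p] → ℤ_[p] := fun r w =>
    if r = 0 then (p : ℤ_[p]) * w
    else invq * ((p : ℤ_[p]) * w - ((-((q : ZMod p) * r)).val : ℤ_[p])) with hG_def
  have hG1 : ∀ r w, g (G r w) = w := by
    intro r w
    by_cases hr : r = 0
    · have h1 := hg ((p : ℤ_[p]) * w)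
      rw [if_pos (dvd_mul_right _ _)] at h1
      have : G r w = (p : ℤ_[p]) * w := by rw [hG_def]; simp [hr]
      rw [this]
      exact mul_left_cancel₀ hp0 h1
    · set a : ℕ := (-((q : ZMod p) * r)).val with ha_def
      have hGrw : G r w = invq * ((p : ℤ_[p]) * w - (a : ℤ_[p])) := by
        rw [hG_def]; simp only [if_neg hr]; rfl
      set u : ℤ_[p] := invq * ((p : ℤ_[p]) * w - (a : ℤ_[p])) with hu_def
      have hqu_u : (q : ℤ_[p]) * u = (p : ℤ_[p]) * w - (a : ℤ_[p]) := by
        rw [hu_def, ← mul_assoc, hinv, one_mul]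
      have hcast_a : ((a : ℕ) : ZMod p) = -((q : ZMod p) * r) := ZMod.natCast_zmod_val _
      have hinvres : PadicInt.toZMod invq * (q : ZMod p) = 1 := by
        have := congrArg PadicInt.toZMod hinv'
        rwa [map_mul, map_natCast, map_one] at this
      have hres : PadicInt.toZMod u = r := by
        rw [hu_def, map_mul, map_sub, map_mul, map_natCast, map_natCast,
          CharP.cast_eq_zero (ZMod p) p, zero_mul, zero_sub, hcast_a, neg_neg, ← mul_assoc,
          hinvres, one_mul]
      have hndvd : ¬ (p : ℤ_[p]) ∣ u := by
        rw [← hdvd_iff, hres]; exact hr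
      have heps : eps0 (-((q : ℤ_[p]) * u)) = a := by
        unfold eps0
        have : -((q : ℤ_[p]) * u) = (a : ℤ_[p]) - (p : ℤ_[p]) * w := by
          rw [hqu_u]; ring
        rw [this, map_sub, map_mul, map_natCast, map_natCast, CharP.cast_eq_zero (ZMod p) p,
          zero_mul, sub_zero, hcast_a]
      have h1 := hg u
      rw [if_neg hndvd, heps, hqu_u] at h1
      have h2 : (p : ℤ_[p]) * g u = (p : ℤ_[p]) * w := by rw [h1]; ring
      rw [hGrw]
      exact mul_left_cancel₀ hp0 h2
  have hG2 : ∀ r w, PadicInt.toZMod (G r w) = r := by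
    intro r w
    by_cases hr : r = 0
    · have : G r w = (p : ℤ_[p]) * w := by rw [hG_def]; simp [hr]
      rw [this, map_mul, map_natCast, CharP.cast_eq_zero (ZMod p) p, zero_mul, hr]
    · set a : ℕ := (-((q : ZMod p) * r)).val with ha_def
      have hGrw : G r w = invq * ((p : ℤ_[p]) * w - (a : ℤ_[p])) := by
        rw [hG_def]; simp only [if_neg hr]; rfl
      have hcast_a : ((a : ℕ) : ZMod p) = -((q : ZMod p) * r) := ZMod.natCast_zmod_val _
      have hinvres : PadicInt.toZMod invq * (q : ZMod p) = 1 := by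
        have := congrArg PadicInt.toZMod hinv'
        rwa [map_mul, map_natCast, map_one] at this
      rw [hGrw, map_mul, map_sub, map_mul, map_natCast, map_natCast,
        CharP.cast_eq_zero (ZMod p) p, zero_mul, zero_sub, hcast_a, neg_neg, ← mul_assoc,
        hinvres, one_mul]
  -- Lipschitz constant
  set pK : NNReal := (p : NNReal)⁻¹ with hpK_def
  have hpK_coe : ((pK : NNReal) : ℝ) = (p : ℝ)⁻¹ := by push_cast [hpK_def]; rfl
  have hGlip : ∀ r, LipschitzWith pK (G r) := by
    intro r
    apply LipschitzWith.of_dist_le_mul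
    intro w w'
    rw [hpK_coe, dist_eq_norm, dist_eq_norm]
    by_cases hr : r = 0
    · have h1 : G r w - G r w' = (p : ℤ_[p]) * (w - w') := by
        rw [hG_def]; simp [hr]; ring
      rw [h1, norm_mul, PadicInt.norm_p]
    · have h1 : G r w - G r w' = invq * ((p : ℤ_[p]) * (w - w')) := by
        rw [hG_def]; simp [hr]; ring
      rw [h1, norm_mul, norm_mul, PadicInt.norm_p]
      calc ‖invq‖ * ((p : ℝ)⁻¹ * ‖w - w'‖)
          ≤ 1 * ((p : ℝ)⁻¹ * ‖w - w'‖) := by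
            apply mul_le_mul_of_nonneg_right (PadicInt.norm_le_one _)
            positivity
        _ = (p : ℝ)⁻¹ * ‖w - w'‖ := one_mul _
  -- the chain of inverse branches
  set chain : List (ZMod p) → ℤ_[p] → ℤ_[p] :=
    fun rs => rs.foldr (fun r f => fun w => G r (f w)) id with hchain_def
  have hchain_nil : ∀ w, chain [] w = w := fun w => rfl
  have hchain_cons : ∀ r rs w, chain (r :: rs) w = G r (chain rs w) := fun r rs w => rfl
  have hchain_iter : ∀ rs : List (ZMod p), ∀ w, g^[rs.length] (chain rs w) = w := by
    intro rs
    induction rs with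
    | nil => intro w; simp [hchain_nil]
    | cons r rs ih =>
      intro w
      rw [hchain_cons, List.length_cons, Function.iterate_succ_apply, hG1]
      exact ih w
  have hchain_res : ∀ rs : List (ZMod p), ∀ i : ℕ, ∀ hi : i < rs.length, ∀ w,
      PadicInt.toZMod (g^[i] (chain rs w)) = rs.get ⟨i, hi⟩ := by
    intro rs
    induction rs with
    | nil => intro i hi; exact absurd hi (Nat.not_lt_zero _)
    | cons r rs ih =>
      intro i hi w
      cases i with
      | zero => simpa [hchain_cons] using hG2 r (chain rs w)
      | succ j =>
        rw [hchain_cons, Function.iterate_succ_apply, hG1]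
        exact ih j (Nat.lt_of_succ_lt_succ hi) w
  have hchain_lip : ∀ rs : List (ZMod p), LipschitzWith (pK ^ rs.length) (chain rs) := by
    intro rs
    induction rs with
    | nil =>
      simpa [hchain_def] using (LipschitzWith.id : LipschitzWith 1 (id : ℤ_[p] → ℤ_[p]))
    | cons r rs ih =>
      have : (fun w => G r (chain rs w)) = G r ∘ chain rs := rfl
      have hcomp := (hGlip r).comp ih
      rw [List.length_cons, pow_succ, mul_comm]
      exact hcomp
  -- injectivity: periodic points are determined by their residue sequence
  have hinj : ∀ u v : ℤ_[p], g^[k] u = u → g^[k] v = v →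
      (∀ i : Fin k, PadicInt.toZMod (g^[(i : ℕ)] u) = PadicInt.toZMod (g^[(i : ℕ)] v)) →
      u = v := by
    intro u v hu hv hres
    have hkpos : 0 < k := hk
    have hfixmul : ∀ w : ℤ_[p], g^[k] w = w → ∀ i : ℕ, g^[i] w = g^[i % k] w := by
      intro w hw i
      conv_lhs => rw [← Nat.mod_add_div i k]
      rw [Function.iterate_add_apply, Function.iterate_mul]
      congr 1
      exact Function.iterate_fixed hw _
    have hres' : ∀ i : ℕ, PadicInt.toZMod (g^[i] u) = PadicInt.toZMod (g^[i] v) := by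
      intro i
      rw [hfixmul u hu i, hfixmul v hv i]
      exact hres ⟨i % k, Nat.mod_lt _ hkpos⟩
    have hmain : ∀ n : ℕ, ∀ i : ℕ, ‖g^[i] u - g^[i] v‖ ≤ ((p : ℝ)⁻¹) ^ n := by
      intro n
      induction n with
      | zero =>
        intro i
        simpa using PadicInt.norm_le_one _
      | succ m ih =>
        intro i
        have h1 := hkey (g^[i] u) (g^[i] v) (hres' i)
        have h2 : g (g^[i] u) = g^[i+1] u := (Function.iterate_succ_apply' g i u).symm
        have h3 : g (g^[i] v) = g^[i+1] v := (Function.iterate_succ_apply' g i v).symm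
        rw [h2, h3] at h1
        calc ‖g^[i] u - g^[i] v‖ ≤ (p : ℝ)⁻¹ * ‖g^[i+1] u - g^[i+1] v‖ := h1
          _ ≤ (p : ℝ)⁻¹ * ((p : ℝ)⁻¹) ^ m := by
              apply mul_le_mul_of_nonneg_left (ih (i + 1))
              positivity
          _ = ((p : ℝ)⁻¹) ^ (m + 1) := by ring
    have hzero : u - v = 0 := by
      by_contra hne
      have hpos : 0 < ‖u - v‖ := norm_pos_iff.mpr hne
      have hlt1 : (p : ℝ)⁻¹ < 1 := by
        rw [inv_lt_one_iff₀]
        right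
        exact_mod_cast hp2
      obtain ⟨n, hn⟩ := exists_pow_lt_of_lt_one hpos hlt1
      have := hmain n 0
      simp only [Function.iterate_zero, id] at this
      linarith
    exact sub_eq_zero.mp hzero
  -- the bijection
  have hbij : Function.Bijective
      (fun (u : {u : ℤ_[p] | g^[k] u = u}) (i : Fin k) =>
        PadicInt.toZMod (g^[(i : ℕ)] (u : ℤ_[p]))) := by
    constructor
    · intro u v h
      apply Subtype.ext
      exact hinj u.1 v.1 u.2 v.2 (fun i => congrFun h i)
    · intro r
      have hlen : (List.ofFn r).length = k := List.length_ofFn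
      have hcontr : ContractingWith (pK ^ k) (chain (List.ofFn r)) := by
        constructor
        · have hpK1 : pK < 1 := by
            rw [hpK_def]
            rw [inv_lt_one_iff₀]
            right
            exact_mod_cast hp2
          calc (pK ^ k : NNReal) < 1 ^ k := by
                apply pow_lt_pow_left₀ hpK1 zero_le
                omega
            _ = 1 := one_pow k
        · have hl := hchain_lip (List.ofFn r)
          rwa [hlen] at hl
      obtain ⟨u, hufix, -⟩ := hcontr.exists_fixedPoint 0 (edist_ne_top _ _)
      have hcu : chain (List.ofFn r) u = u := hufix
      have huk : g^[k] u = u := by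
        have h := hchain_iter (List.ofFn r) u
        rw [hlen, hcu] at h
        exact h
      refine ⟨⟨u, huk⟩, ?_⟩
      funext i
      have hi : (i : ℕ) < (List.ofFn r).length := by rw [hlen]; exact i.2
      have hres2 := hchain_res (List.ofFn r) (i : ℕ) hi u
      rw [hcu] at hres2
      have hget : (List.ofFn r).get ⟨(i : ℕ), hi⟩ = r i := by
        simp
      simp only [hres2, hget]
  rw [← Nat.card_coe_set_eq, Nat.card_eq_of_bijective _ hbij,
    Nat.card_eq_fintype_card, Fintype.card_fun]
  simp [ZMod.card]
end

section
/- For natural numbers k and ℓ, the equation 2^k − 3^ℓ = 1 holds if and only if (k, ℓ) = (1, 0) or (k, ℓ) = (2, 1). -/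
/-- For natural numbers `k`, `ℓ`: `2^k − 3^ℓ = 1` iff `(k, ℓ) = (1, 0)` or `(k, ℓ) = (2, 1)`. -/
theorem stmt10 (k l : ℕ) :
    (2 : ℤ) ^ k - 3 ^ l = 1 ↔ (k = 1 ∧ l = 0) ∨ (k = 2 ∧ l = 1) := by
  constructor
  · intro h
    have hk : k ≤ 2 := by
      by_contra hk
      push_neg at hk
      have h8 : (8 : ℤ) ∣ 2 ^ k := by
        have : (2:ℤ) ^ 3 ∣ (2:ℤ) ^ k := pow_dvd_pow 2 hk
        simpa using this
      have hm : ∀ m : ℕ, (3:ℤ) ^ m % 8 = 1 ∨ (3:ℤ) ^ m % 8 = 3 := by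
        intro m
        induction m with
        | zero => left; norm_num
        | succ n ih =>
          rcases ih with h1 | h1
          · right; rw [pow_succ]; omega
          · left; rw [pow_succ]; omega
      have hm' := hm l
      obtain ⟨c, hc⟩ := h8
      omega
    have hl : l ≤ 1 := by
      by_contra hl
      push_neg at hl
      have h9 : (9:ℤ) ≤ 3 ^ l := by
        calc (9:ℤ) = 3 ^ 2 := by norm_num
        _ ≤ 3 ^ l := pow_le_pow_right₀ (by norm_num) hl
      have h4 : (2:ℤ) ^ k ≤ 4 := by
        calc (2:ℤ) ^ k ≤ 2 ^ 2 := pow_le_pow_right₀ (by norm_num) hk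
        _ = 4 := by norm_num
      omega
    interval_cases k <;> interval_cases l <;> simp_all
  · rintro (⟨rfl, rfl⟩ | ⟨rfl, rfl⟩) <;> norm_num
end

section
/- For natural numbers k and ℓ, the equation 3^ℓ − 2^k = 1 holds if and only if (k, ℓ) = (1, 1) or (k, ℓ) = (3, 2). -/
lemma pow3_eq_aux (l n : ℕ) (h2 : 2 ≤ n) (h : (3 : ℤ) ^ l = 3 ^ n) : l = n := by
  have : ((3:ℕ) : ℤ) ^ l = ((3:ℕ):ℤ) ^ n := by push_cast; exact_mod_cast h
  have := Nat.pow_right_injective (by norm_num : 2 ≤ 3) (by exact_mod_cast this)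
  exact this

/-- For natural numbers `k`, `ℓ`: `3^ℓ − 2^k = 1` iff `(k, ℓ) = (1, 1)` or `(k, ℓ) = (3, 2)`. -/
theorem stmt11 (k l : ℕ) :
    (3 : ℤ) ^ l - 2 ^ k = 1 ↔ (k = 1 ∧ l = 1) ∨ (k = 3 ∧ l = 2) := by
  constructor
  · intro h
    by_cases hk : k ≤ 3
    · interval_cases k
      · -- 3^l = 2
        exfalso
        have h3 : (3:ℤ)^l = 2 := by linarith
        rcases Nat.eq_zero_or_pos l with hl | hl
        · subst hl; norm_num at h3
        · have : (3:ℤ) ∣ 3^l := dvd_pow_self 3 hl.ne'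
          rw [h3] at this
          norm_num at this
      · -- 3^l = 3
        have h3 : (3:ℤ)^l = 3 := by linarith
        left
        refine ⟨rfl, ?_⟩
        have : (3:ℤ)^l = 3^1 := by simpa using h3
        rcases Nat.eq_zero_or_pos l with hl | hl
        · subst hl; norm_num at h3
        · have hd : (3:ℤ) ∣ 3^l := dvd_pow_self 3 hl.ne'
          -- l = 1 since 3^l = 3
          by_contra hne
          have hl2 : 2 ≤ l := by omega
          have : (9:ℤ) ∣ 3^l := by
            calc (9:ℤ) = 3^2 := by norm_num
            _ ∣ 3^l := pow_dvd_pow 3 hl2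
          rw [h3] at this
          norm_num at this
      · -- 3^l = 5
        exfalso
        have h3 : (3:ℤ)^l = 5 := by linarith
        rcases Nat.eq_zero_or_pos l with hl | hl
        · subst hl; norm_num at h3
        · have : (3:ℤ) ∣ 3^l := dvd_pow_self 3 hl.ne'
          rw [h3] at this
          norm_num at this
      · -- 3^l = 9
        right
        refine ⟨rfl, ?_⟩
        have h3 : (3:ℤ)^l = 3^2 := by norm_num; linarith
        exact pow3_eq_aux l 2 le_rfl h3
    · -- k ≥ 4 : contradiction
      exfalso
      push_neg at hk
      have hk4 : 4 ≤ k := hk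
      -- mod 16 : 3^l = 1
      have h16 : (3 : ZMod 16) ^ l = 1 := by
        have := congrArg (Int.cast : ℤ → ZMod 16) h
        push_cast at this
        have h2k : (2 : ZMod 16) ^ k = 0 := by
          obtain ⟨m, rfl⟩ := Nat.exists_eq_add_of_le hk4
          rw [pow_add]
          have h24 : (2 : ZMod 16) ^ 4 = 0 := by decide
          rw [h24, zero_mul]
        rw [h2k] at this
        linear_combination this
      -- so l % 4 = 0
      have hmod : l % 4 = 0 := by
        have hl : (3 : ZMod 16) ^ (l % 4) = 1 := by
          conv at h16 => rw [← Nat.div_add_mod l 4]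
          rw [pow_add, pow_mul] at h16
          have h34 : (3 : ZMod 16) ^ 4 = 1 := by decide
          rw [h34, one_pow, one_mul] at h16
          exact h16
        have hb : l % 4 < 4 := Nat.mod_lt _ (by norm_num)
        interval_cases h : l % 4 <;> first | rfl | (revert hl; decide)
      -- 5 ∣ 3^l - 1 = 2^k, contradiction
      obtain ⟨m, hm⟩ : 4 ∣ l := Nat.dvd_of_mod_eq_zero hmod
      have hd : (5 : ℤ) ∣ 2 ^ k := by
        have h1 : (2 : ℤ) ^ k = (81 : ℤ) ^ m - 1 ^ m := by
          rw [hm, pow_mul] at h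
          norm_num at h ⊢
          linarith
        have h2 : (81 : ℤ) - 1 ∣ (81 : ℤ) ^ m - 1 ^ m := sub_dvd_pow_sub_pow 81 1 m
        rw [h1]
        exact dvd_trans (by norm_num) h2
      have hp : Prime (5 : ℤ) := by norm_num
      have := hp.dvd_of_dvd_pow hd
      norm_num at this
  · rintro (⟨rfl, rfl⟩ | ⟨rfl, rfl⟩) <;> norm_num
end

section
/- Let u ∈ ℤ_p be rational, so that every iterate u_n = g_{p,q}^n(u) is rational. The sequence (u_n)_{n∈ℕ} fails to be ultimately periodic if and only if the archimedean absolute values |u_n|_∞ of the rational numbers u_n tend to +∞ as n → ∞. -/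
open scoped Classical

private lemma per_of_eq {α : Type*} (g : α → α) (u : α) (m k : ℕ)
    (h : g^[m + k] u = g^[m] u) : ∀ n ≥ m, g^[n + k] u = g^[n] u := by
  intro n hn
  obtain ⟨t, rfl⟩ := Nat.exists_eq_add_of_le hn
  have e1 : g^[m + t + k] u = g^[t] (g^[m + k] u) := by
    rw [show m + t + k = t + (m + k) by ring]
    exact Function.iterate_add_apply g t (m + k) u
  rw [e1, h, ← Function.iterate_add_apply, Nat.add_comm t m]

/-- Let `u ∈ ℤ_p` be rational, with `v n ∈ ℚ` the rational number equal to the iterate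
`g^n(u)`. The orbit of `u` fails to be ultimately periodic iff `|v n|_∞ → +∞`. -/
theorem stmt15 (p q : ℕ) [Fact p.Prime] (hq : 0 < q) (hpq : Nat.Coprime p q)
    (g : ℤ_[p] → ℤ_[p])
    (hg : ∀ u : ℤ_[p], (p : ℤ_[p]) * g u =
      if (p : ℤ_[p]) ∣ u then u
      else (q : ℤ_[p]) * u + (eps0 (-((q : ℤ_[p]) * u)) : ℤ_[p]))
    (u : ℤ_[p]) (v : ℕ → ℚ)
    (hv : ∀ n : ℕ, ((v n : ℚ) : ℚ_[p]) = ((g^[n] u : ℤ_[p]) : ℚ_[p])) :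
    (¬ ∃ n₀ : ℕ, ∃ k ≥ 1, ∀ n ≥ n₀, g^[n + k] u = g^[n] u) ↔
      Filter.Tendsto (fun n : ℕ => |v n|) Filter.atTop Filter.atTop := by
  have hp : p.Prime := Fact.out
  have hp0 : 0 < p := hp.pos
  -- v determined: equality of iterates gives equality of v's
  have hv_of_g : ∀ m n : ℕ, g^[m] u = g^[n] u → v m = v n := by
    intro m n h
    have : ((v m : ℚ) : ℚ_[p]) = ((v n : ℚ) : ℚ_[p]) := by rw [hv, hv, h]
    exact_mod_cast this
  have hg_of_v : ∀ m n : ℕ, v m = v n → g^[m] u = g^[n] u := by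
    intro m n h
    have : ((g^[m] u : ℤ_[p]) : ℚ_[p]) = ((g^[n] u : ℤ_[p]) : ℚ_[p]) := by
      rw [← hv, ← hv, h]
    exact Subtype.coe_injective this
  -- p does not divide denominators
  have hden_p : ∀ n : ℕ, ¬ (p ∣ (v n).den) := by
    intro n hdvd
    have hnorm : ‖((v n : ℚ) : ℚ_[p])‖ ≤ 1 := by rw [hv]; exact PadicInt.norm_le_one _
    have hu : IsUnit ((v n).den : ℤ_[p]) := PadicInt.isUnit_den _ hnorm
    have : IsUnit ((p : ℤ_[p])) := by
      obtain ⟨c, hc⟩ := hdvd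
      have : ((v n).den : ℤ_[p]) = (p : ℤ_[p]) * (c : ℤ_[p]) := by
        rw [hc]; push_cast; ring
      exact isUnit_of_mul_isUnit_left (this ▸ hu)
    rw [PadicInt.isUnit_iff, PadicInt.norm_p] at this
    rw [inv_eq_one] at this
    have hp1 : p = 1 := by exact_mod_cast this
    have := hp.one_lt
    omega
  -- the recurrence in ℚ
  have hrec : ∀ n : ℕ, ∃ c e : ℕ, (p : ℚ) * v (n + 1) = (c : ℚ) * v n + (e : ℚ) := by
    intro n
    have hit : g^[n + 1] u = g (g^[n] u) := Function.iterate_succ_apply' g n u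
    have H := hg (g^[n] u)
    by_cases hd : (p : ℤ_[p]) ∣ g^[n] u
    · refine ⟨1, 0, Rat.cast_injective (α := ℚ_[p]) ?_⟩
      rw [if_pos hd] at H
      push_cast
      rw [hv, hv, hit, one_mul, add_zero]
      exact_mod_cast congrArg ((↑·) : ℤ_[p] → ℚ_[p]) H
    · refine ⟨q, eps0 (-((q : ℤ_[p]) * g^[n] u)), ?_⟩
      rw [if_neg hd] at H
      set e := eps0 (-((q : ℤ_[p]) * g^[n] u)) with he
      apply Rat.cast_injective (α := ℚ_[p])
      push_cast
      rw [hv, hv, hit]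
      exact_mod_cast congrArg ((↑·) : ℤ_[p] → ℚ_[p]) H
  -- denominators non-increasing
  have hden_step : ∀ n : ℕ, (v (n + 1)).den ∣ (v n).den := by
    intro n
    obtain ⟨c, e, hce⟩ := hrec n
    have hpQ : (p : ℚ) ≠ 0 := by exact_mod_cast hp0.ne'
    have hveq : v (n + 1) = ((c : ℚ) * v n + (e : ℚ)) * ((p : ℚ))⁻¹ := by
      field_simp
      linarith [hce]
    have h1 : (v (n + 1)).den ∣ ((c : ℚ) * v n + (e : ℚ)).den * ((p : ℚ))⁻¹.den := by
      rw [hveq]; exact Rat.mul_den_dvd _ _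
    rw [Rat.inv_natCast_den_of_pos hp0] at h1
    have h2 : ((c : ℚ) * v n + (e : ℚ)).den ∣ (v n).den := by
      have h3 : ((c : ℚ) * v n + (e : ℚ)).den ∣ ((c : ℚ) * v n).den * ((e : ℚ)).den :=
        Rat.add_den_dvd _ _
      have h4 : ((c : ℚ) * v n).den ∣ ((c : ℚ)).den * (v n).den := Rat.mul_den_dvd _ _
      simp only [Rat.den_natCast, one_mul, mul_one] at h3 h4
      exact h3.trans h4
    have h5 : (v (n + 1)).den ∣ (v n).den * p := h1.trans (mul_dvd_mul_right h2 p)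
    have hcop : Nat.Coprime (v (n + 1)).den p :=
      Nat.Coprime.symm ((Nat.Prime.coprime_iff_not_dvd hp).mpr (hden_p (n + 1)))
    exact (Nat.Coprime.dvd_of_dvd_mul_right hcop h5)
  set d : ℕ := (v 0).den with hd
  have hd0 : 0 < d := (v 0).pos
  have hden : ∀ n : ℕ, (v n).den ∣ d := by
    intro n
    induction n with
    | zero => exact dvd_rfl
    | succ k ih => exact (hden_step k).trans ih
  -- v n * d is an integer
  have hint : ∀ n : ℕ, (((v n * (d : ℚ)).num : ℚ)) = v n * (d : ℚ) := by
    intro n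
    obtain ⟨c, hc⟩ := hden n
    have hden0 : ((v n).den : ℚ) ≠ 0 := by exact_mod_cast (v n).pos.ne'
    have hmul : v n * ((v n).den : ℚ) = ((v n).num : ℚ) := by
      nth_rewrite 1 [← Rat.num_div_den (v n)]
      exact div_mul_cancel₀ _ hden0
    have hz : ((((v n).num * c : ℤ) : ℚ)) = v n * (d : ℚ) := by
      rw [hc]
      push_cast
      rw [← mul_assoc, hmul]
    rw [← hz, Rat.num_intCast]
  constructor
  · -- not ultimately periodic → |v| → ∞
    intro hnp
    by_contra hnt
    apply hnp
    rw [Filter.tendsto_atTop] at hnt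
    push_neg at hnt
    obtain ⟨b, hb⟩ := hnt
    simp only [← not_le] at hb
    rw [Filter.frequently_atTop] at hb
    -- infinite set of n with |v n| < b
    set T : Set ℕ := {n | ¬ b ≤ |v n|} with hT
    have hTinf : T.Infinite := by
      apply Set.infinite_of_not_bddAbove
      rw [not_bddAbove_iff]
      intro x
      obtain ⟨n, hn1, hn2⟩ := hb (x + 1)
      exact ⟨n, hn2, by omega⟩
    set f : ℕ → ℤ := fun n => (v n * (d : ℚ)).num with hf
    set B : ℤ := ⌈b * d⌉ with hB
    have hmaps : Set.MapsTo f T (Set.Icc (-B) B) := by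
      intro n hn
      have hlt : |v n| < b := by rwa [Set.mem_setOf_eq, not_le] at hn
      have habs : |((f n : ℚ))| ≤ b * d := by
        rw [hf]
        simp only
        rw [hint n, abs_mul, abs_of_nonneg (by positivity : (0:ℚ) ≤ (d:ℚ))]
        have : (d : ℚ) > 0 := by exact_mod_cast hd0
        nlinarith [abs_nonneg (v n)]
      have hbB : (b * d : ℚ) ≤ (B : ℚ) := by exact_mod_cast Int.le_ceil (b * d)
      rw [abs_le] at habs
      constructor
      · have : ((-B : ℤ) : ℚ) ≤ (f n : ℚ) := by push_cast; linarith
        exact_mod_cast this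
      · have : ((f n : ℤ) : ℚ) ≤ (B : ℚ) := by push_cast; linarith
        exact_mod_cast this
    obtain ⟨m, hm, n, hn, hmn, hfeq⟩ :=
      hTinf.exists_ne_map_eq_of_mapsTo hmaps (Set.finite_Icc (-B) B)
    have hveq : v m = v n := by
      have h1 : v m * (d : ℚ) = v n * (d : ℚ) := by
        rw [← hint m, ← hint n]
        exact_mod_cast hfeq
      have hdne : (d : ℚ) ≠ 0 := by positivity
      exact mul_right_cancel₀ hdne h1
    have hgeq := hg_of_v m n hveq
    rcases Nat.lt_or_ge m n with h | h
    · refine ⟨m, n - m, by omega, per_of_eq g u m (n - m) ?_⟩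
      rw [show m + (n - m) = n by omega]
      exact hgeq.symm
    · have hlt : n < m := by omega
      refine ⟨n, m - n, by omega, per_of_eq g u n (m - n) ?_⟩
      rw [show n + (m - n) = m by omega]
      exact hgeq
  · -- |v| → ∞ → not ultimately periodic
    intro ht ⟨n₀, k, hk, hper⟩
    have hvper : ∀ m : ℕ, v (n₀ + m * k) = v n₀ := by
      intro m
      induction m with
      | zero => simp
      | succ j ih =>
        have := hper (n₀ + j * k) (by omega)
        have h2 : v (n₀ + j * k + k) = v (n₀ + j * k) := hv_of_g _ _ this
        rw [show n₀ + (j + 1) * k = n₀ + j * k + k by ring, h2, ih]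
    rw [Filter.tendsto_atTop] at ht
    obtain ⟨N, hN⟩ := (ht (|v n₀| + 1)).exists_forall_of_atTop
    have hge : n₀ + N * k ≥ N := by nlinarith
    have := hN (n₀ + N * k) hge
    rw [hvper N] at this
    linarith
end
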